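/- arXiv:2408.00543 — 11 statements merged into one kernel-verified Lean document; each statement's English description precedes it below -/
import Mathlib

section
/- For every x ∈ ℝⁿ one has θ_SD(x) ≤ 0, and the following statements are equivalent: (i) x is not Pareto critical; (ii) d_SD(x) ≠ 0; (iii) θ_SD(x) < 0. -/
open RealInnerProductSpace

noncomputable section

abbrev E (n : ℕ) := EuclideanSpace ℝ (Fin n)

def maxD {n m : ℕ} [NeZero m] (f : Fin m → E n → ℝ) (x d : E n) : ℝ :=
  Finset.univ.sup' Finset.univ_nonempty (fun i => ⟪gradient (f i) x, d⟫)

def ParetoCritical {n m : ℕ} (f : Fin m → E n → ℝ) (x : E n) : Prop :=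
  ∀ d : E n, ∃ i, 0 ≤ ⟪gradient (f i) x, d⟫

/-- θ_SD(x) ≤ 0 and equivalence of non-criticality, d_SD(x) ≠ 0, θ_SD(x) < 0. -/
theorem stmt1 {n m : ℕ} [NeZero m] (f : Fin m → E n → ℝ)
    (hf : ∀ i, ContDiff ℝ 1 (f i)) (x dsd : E n) (θ : ℝ)
    (hmin : ∀ d : E n, maxD f x dsd + ‖dsd‖ ^ 2 / 2 ≤ maxD f x d + ‖d‖ ^ 2 / 2)
    (hθ : θ = maxD f x dsd + ‖dsd‖ ^ 2 / 2) :
    θ ≤ 0 ∧ (¬ ParetoCritical f x ↔ dsd ≠ 0) ∧ (¬ ParetoCritical f x ↔ θ < 0) := by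
  have hzero : maxD f x (0 : E n) = 0 := by
    unfold maxD; simp
  have hθ0 : θ ≤ 0 := by
    have h := hmin 0
    rw [hzero] at h
    simp only [norm_zero] at h
    rw [hθ]; linarith
  -- critical implies dsd = 0 and θ = 0
  have hcrit : ParetoCritical f x → dsd = 0 ∧ θ = 0 := by
    intro hc
    obtain ⟨i, hi⟩ := hc dsd
    have h1 : (0 : ℝ) ≤ maxD f x dsd := by
      unfold maxD
      exact le_trans hi (Finset.le_sup' (fun j => ⟪gradient (f j) x, dsd⟫) (Finset.mem_univ i))
    have h2 : ‖dsd‖ ^ 2 ≤ 0 := by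
      have := hθ0; rw [hθ] at this; linarith
    have hd0 : dsd = 0 := by
      have h3 : ‖dsd‖ = 0 := by nlinarith [norm_nonneg dsd]
      exact norm_eq_zero.mp h3
    refine ⟨hd0, ?_⟩
    rw [hθ, hd0, hzero]; simp
  -- not critical implies θ < 0
  have hnc : ¬ ParetoCritical f x → θ < 0 := by
    intro hnc
    unfold ParetoCritical at hnc
    push_neg at hnc
    obtain ⟨d, hd⟩ := hnc
    set M := maxD f x d with hM
    have hMlt : M < 0 := by
      rw [hM]; unfold maxD
      rw [Finset.sup'_lt_iff]
      exact fun i _ => hd i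
    have hdne : d ≠ 0 := by
      intro h
      have := hd 0
      rw [h, inner_zero_right] at this
      linarith
    have hN : (0 : ℝ) < ‖d‖ ^ 2 := by
      have h : ‖d‖ ≠ 0 := norm_ne_zero_iff.mpr hdne
      positivity
    set t : ℝ := -M / ‖d‖ ^ 2 with htdef
    have ht : 0 < t := by
      apply div_pos (by linarith) hN
    have hscale : maxD f x (t • d) ≤ t * M := by
      apply Finset.sup'_le
      intro i _
      rw [real_inner_smul_right]
      exact mul_le_mul_of_nonneg_left
        (Finset.le_sup' (fun j => ⟪gradient (f j) x, d⟫) (Finset.mem_univ i)) ht.le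
    have hmain := hmin (t • d)
    have hnorm : ‖t • d‖ ^ 2 = t ^ 2 * ‖d‖ ^ 2 := by
      rw [norm_smul]; rw [Real.norm_eq_abs, mul_pow, sq_abs]
    have hθle : θ ≤ t * M + t ^ 2 * ‖d‖ ^ 2 / 2 := by
      rw [hθ]
      calc maxD f x dsd + ‖dsd‖ ^ 2 / 2 ≤ maxD f x (t • d) + ‖t • d‖ ^ 2 / 2 := hmain
        _ ≤ t * M + t ^ 2 * ‖d‖ ^ 2 / 2 := by rw [hnorm]; linarith
    have hval : t * M + t ^ 2 * ‖d‖ ^ 2 / 2 < 0 := by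
      rw [htdef]
      have hMne : M ≠ 0 := ne_of_lt hMlt
      have hNne : ‖d‖ ^ 2 ≠ 0 := ne_of_gt hN
      have : -M / ‖d‖ ^ 2 * M + (-M / ‖d‖ ^ 2) ^ 2 * ‖d‖ ^ 2 / 2
          = -(M ^ 2 / (2 * ‖d‖ ^ 2)) := by field_simp; ring
      rw [this]
      have : 0 < M ^ 2 / (2 * ‖d‖ ^ 2) := by positivity
      linarith
    linarith
  refine ⟨hθ0, ?_, ?_⟩
  · constructor
    · intro h hd0
      have := hnc h
      rw [hθ, hd0, hzero] at this; simp at this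
    · intro hd0 hc
      exact hd0 (hcrit hc).1
  · constructor
    · exact hnc
    · intro hθlt hc
      have := (hcrit hc).2
      linarith
end
end

section
/- The maps x ↦ d_SD(x) and x ↦ θ_SD(x) are continuous on ℝⁿ. -/
open RealInnerProductSpace

noncomputable section

/-- continuity of x ↦ d_SD(x) and x ↦ θ_SD(x). -/
theorem stmt2 {n m : ℕ} [NeZero m] (f : Fin m → E n → ℝ)
    (hf : ∀ i, ContDiff ℝ 1 (f i)) (dSD : E n → E n) (θSD : E n → ℝ)
    (hmin : ∀ x d : E n, maxD f x (dSD x) + ‖dSD x‖ ^ 2 / 2 ≤ maxD f x d + ‖d‖ ^ 2 / 2)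
    (hθ : ∀ x, θSD x = maxD f x (dSD x) + ‖dSD x‖ ^ 2 / 2) :
    Continuous dSD ∧ Continuous θSD := by
  set g : Fin m → E n → E n := fun i x => gradient (f i) x with hgdef
  have hg : ∀ i, Continuous (g i) := fun i =>
    (InnerProductSpace.toDual ℝ _).symm.continuous.comp ((hf i).continuous_fderiv one_ne_zero)
  set C : E n → ℝ := fun x => ∑ i, ‖g i x‖ with hCdef
  have hC : Continuous C := continuous_finset_sum _ fun i _ => (hg i).norm
  have hCnn : ∀ x, 0 ≤ C x := fun x => Finset.sum_nonneg fun i _ => norm_nonneg _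
  set S : E n → E n → ℝ := fun x y => ∑ i, ‖g i x - g i y‖ with hSdef
  have hSnn : ∀ x y, 0 ≤ S x y := fun x y => Finset.sum_nonneg fun i _ => norm_nonneg _
  have hSsymm : ∀ x y, S x y = S y x := by
    intro x y
    exact Finset.sum_congr rfl fun i _ => norm_sub_rev _ _
  -- single term bounds
  have hterm : ∀ (x : E n) (i : Fin m), ‖g i x‖ ≤ C x := by
    intro x i
    exact Finset.single_le_sum (f := fun j => ‖g j x‖) (fun j _ => norm_nonneg _) (Finset.mem_univ i)
  have hStrm : ∀ (x y : E n) (i : Fin m), ‖g i x - g i y‖ ≤ S x y := by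
    intro x y i
    exact Finset.single_le_sum (f := fun j => ‖g j x - g j y‖) (fun j _ => norm_nonneg _) (Finset.mem_univ i)
  -- lower bound for maxD
  have h1 : ∀ (x d : E n), -(C x * ‖d‖) ≤ maxD f x d := by
    intro x d
    obtain ⟨i⟩ : Nonempty (Fin m) := ⟨⟨0, Nat.pos_of_ne_zero (NeZero.ne m)⟩⟩
    have h := Finset.le_sup' (fun i => ⟪g i x, d⟫) (Finset.mem_univ i)
    have habs : |⟪g i x, d⟫| ≤ ‖g i x‖ * ‖d‖ := abs_real_inner_le_norm _ _
    have : -(‖g i x‖ * ‖d‖) ≤ ⟪g i x, d⟫ := by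
      have := neg_abs_le (⟪g i x, d⟫); linarith
    have hc : ‖g i x‖ * ‖d‖ ≤ C x * ‖d‖ :=
      mul_le_mul_of_nonneg_right (hterm x i) (norm_nonneg d)
    calc -(C x * ‖d‖) ≤ -(‖g i x‖ * ‖d‖) := by linarith
      _ ≤ ⟪g i x, d⟫ := this
      _ ≤ maxD f x d := h
  -- shift bound for maxD
  have h2 : ∀ (x y d : E n), maxD f x d ≤ maxD f y d + S x y * ‖d‖ := by
    intro x y d
    apply Finset.sup'_le
    intro i _
    have hin : ⟪g i x, d⟫ = ⟪g i y, d⟫ + ⟪g i x - g i y, d⟫ := by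
      rw [inner_sub_left]; ring
    have h3 : ⟪g i y, d⟫ ≤ maxD f y d := Finset.le_sup' (fun i => ⟪g i y, d⟫) (Finset.mem_univ i)
    have h4 : ⟪g i x - g i y, d⟫ ≤ ‖g i x - g i y‖ * ‖d‖ := real_inner_le_norm _ _
    have h5 : ‖g i x - g i y‖ * ‖d‖ ≤ S x y * ‖d‖ :=
      mul_le_mul_of_nonneg_right (hStrm x y i) (norm_nonneg d)
    linarith
  -- strong convexity at minimizer
  have h3 : ∀ (x d : E n), ‖d - dSD x‖ ^ 2 / 4 ≤
      (maxD f x d + ‖d‖ ^ 2 / 2) - (maxD f x (dSD x) + ‖dSD x‖ ^ 2 / 2) := by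
    intro x d
    set a := dSD x with ha
    set mid : E n := (2 : ℝ)⁻¹ • (a + d) with hmid
    have hmmax : maxD f x mid ≤ (maxD f x a + maxD f x d) / 2 := by
      apply Finset.sup'_le
      intro i _
      have : ⟪g i x, mid⟫ = (⟪g i x, a⟫ + ⟪g i x, d⟫) / 2 := by
        rw [hmid, inner_smul_right, inner_add_right]; ring
      rw [this]
      have h3 : ⟪g i x, a⟫ ≤ maxD f x a := Finset.le_sup' (fun i => ⟪g i x, a⟫) (Finset.mem_univ i)
      have h4 : ⟪g i x, d⟫ ≤ maxD f x d := Finset.le_sup' (fun i => ⟪g i x, d⟫) (Finset.mem_univ i)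
      linarith
    have hpar : ‖a + d‖ * ‖a + d‖ + ‖a - d‖ * ‖a - d‖ = 2 * (‖a‖ * ‖a‖ + ‖d‖ * ‖d‖) :=
      by have := parallelogram_law_with_norm ℝ a d; simpa only [sq] using this
    have hmn : ‖mid‖ = ‖a + d‖ / 2 := by
      rw [hmid, norm_smul]
      simp [norm_inv]
      ring
    have hmin' := hmin x mid
    rw [← ha] at hmin'
    have hrev : ‖d - a‖ = ‖a - d‖ := norm_sub_rev _ _
    have hsq : ‖mid‖ ^ 2 = ‖a + d‖ ^ 2 / 4 := by rw [hmn]; ring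
    have hpar' : ‖a + d‖ ^ 2 + ‖a - d‖ ^ 2 = 2 * (‖a‖ ^ 2 + ‖d‖ ^ 2) := by
      rw [sq, sq, sq, sq]; exact hpar
    rw [hrev]
    linarith
  -- bound on the minimizer
  have h4 : ∀ x : E n, ‖dSD x‖ ≤ 2 * C x := by
    intro x
    have h0 : maxD f x 0 = 0 := by
      unfold maxD
      have : ∀ i : Fin m, ⟪gradient (f i) x, (0 : E n)⟫ = 0 := fun i => inner_zero_right _
      simp [this]
    have hmin' := hmin x 0
    rw [h0] at hmin'
    simp at hmin'
    have hlow := h1 x (dSD x)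
    rcases eq_or_lt_of_le (norm_nonneg (dSD x)) with h | h
    · rw [← h]; linarith [hCnn x]
    · nlinarith
  -- stability estimate
  have h5 : ∀ x y : E n, ‖dSD y - dSD x‖ ^ 2 ≤ 4 * S x y * (C x + C y) := by
    intro x y
    set a := dSD x
    set b := dSD y
    have e1 := h3 x b
    have e2 := h3 y a
    have e3 := h2 x y b
    have e4 := h2 y x a
    rw [hSsymm y x] at e4
    have hrev : ‖a - b‖ = ‖b - a‖ := norm_sub_rev _ _
    have hb : ‖b‖ ≤ 2 * C y := h4 y
    have ha : ‖a‖ ≤ 2 * C x := h4 x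
    have hrev2 : ‖a - b‖ ^ 2 = ‖b - a‖ ^ 2 := by rw [hrev]
    have hsum : ‖b - a‖ ^ 2 / 2 ≤ S x y * ‖a‖ + S x y * ‖b‖ := by linarith
    have m1 : S x y * ‖b‖ ≤ S x y * (2 * C y) := mul_le_mul_of_nonneg_left hb (hSnn x y)
    have m2 : S x y * ‖a‖ ≤ S x y * (2 * C x) := mul_le_mul_of_nonneg_left ha (hSnn x y)
    nlinarith [m1, m2, hsum]
  -- continuity of dSD
  have hScont : ∀ x : E n, Continuous (fun y => S x y) :=
    fun x => continuous_finset_sum _ fun i _ => (continuous_const.sub (hg i)).norm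
  have hd : Continuous dSD := by
    rw [continuous_iff_continuousAt]
    intro x
    rw [ContinuousAt, tendsto_iff_norm_sub_tendsto_zero]
    apply squeeze_zero (fun y => norm_nonneg _)
      (g := fun y => Real.sqrt (4 * S x y * (C x + C y)))
    · intro y
      have hnn : (0:ℝ) ≤ 4 * S x y * (C x + C y) := by
        have := hSnn x y; have := hCnn x; have := hCnn y; positivity
      rw [Real.le_sqrt (norm_nonneg _) hnn]
      exact h5 x y
    · have hcont : Continuous (fun y => Real.sqrt (4 * S x y * (C x + C y))) := by
        apply Real.continuous_sqrt.comp
        exact ((continuous_const.mul (hScont x)).mul (continuous_const.add hC))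
      have := hcont.tendsto x
      have hzero : Real.sqrt (4 * S x x * (C x + C x)) = 0 := by
        have : S x x = 0 := by
          simp [hSdef]
        rw [this]
        simp
      rwa [hzero] at this
  refine ⟨hd, ?_⟩
  -- continuity of θSD
  have : θSD = fun x => maxD f x (dSD x) + ‖dSD x‖ ^ 2 / 2 := funext hθ
  rw [this]
  apply Continuous.add
  · exact Continuous.finset_sup'_apply Finset.univ_nonempty
      (fun i _ => ((hg i).inner hd))
  · exact ((hd.norm.pow 2).div_const 2)
end
end

section
/- For every x ∈ ℝⁿ there exists λ ∈ Δ_m minimizing λ ↦ ½‖Σ_{i=1}^m λ_i ∇f_i(x)‖² over Δ_m such that d_SD(x) = −Σ_{i=1}^m λ_i ∇f_i(x) and θ_SD(x) = −½‖d_SD(x)‖²; moreover ⟨∇f_i(x), d_SD(x)⟩ ≤ −‖d_SD(x)‖² for every i = 1, …, m. -/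
open RealInnerProductSpace

noncomputable section

lemma aux_inner_nonneg {n : ℕ} (u v : E n)
    (h : ∀ t : ℝ, t ∈ Set.Icc (0:ℝ) 1 → ‖u‖^2 ≤ ‖u + t • v‖^2) :
    0 ≤ ⟪u, v⟫ := by
  by_contra hneg
  push_neg at hneg
  have hv : v ≠ 0 := by rintro rfl; simp at hneg
  have hv2 : (0:ℝ) < ‖v‖^2 := pow_pos (norm_pos_iff.mpr hv) 2
  set c : ℝ := -⟪u, v⟫ with hc
  have hcpos : 0 < c := by rw [hc]; linarith
  set t : ℝ := min 1 (c / ‖v‖^2) with ht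
  have htpos : 0 < t := lt_min one_pos (div_pos hcpos hv2)
  have ht1 : t ≤ 1 := min_le_left _ _
  have htle : t * ‖v‖^2 ≤ c := by
    have : t ≤ c / ‖v‖^2 := min_le_right _ _
    calc t * ‖v‖^2 ≤ (c / ‖v‖^2) * ‖v‖^2 := by nlinarith
      _ = c := by field_simp
  have h1 := h t ⟨htpos.le, ht1⟩
  have hexp : ‖u + t • v‖^2 = ‖u‖^2 + 2 * (t * ⟪u, v⟫) + t^2 * ‖v‖^2 := by
    rw [norm_add_sq_real, real_inner_smul_right, norm_smul, mul_pow,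
      Real.norm_eq_abs, sq_abs]
  rw [hexp] at h1
  nlinarith [mul_le_mul_of_nonneg_left htle htpos.le]

/-- dual characterization of the steepest descent direction. -/
theorem stmt3 {n m : ℕ} [NeZero m] (f : Fin m → E n → ℝ)
    (hf : ∀ i, ContDiff ℝ 1 (f i)) (x dsd : E n) (θ : ℝ)
    (hmin : ∀ d : E n, maxD f x dsd + ‖dsd‖ ^ 2 / 2 ≤ maxD f x d + ‖d‖ ^ 2 / 2)
    (hθ : θ = maxD f x dsd + ‖dsd‖ ^ 2 / 2) :
    ∃ lam ∈ stdSimplex ℝ (Fin m),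
      (∀ μ ∈ stdSimplex ℝ (Fin m),
        ‖∑ i, lam i • gradient (f i) x‖ ^ 2 / 2 ≤ ‖∑ i, μ i • gradient (f i) x‖ ^ 2 / 2) ∧
      dsd = -∑ i, lam i • gradient (f i) x ∧
      θ = -‖dsd‖ ^ 2 / 2 ∧
      ∀ i, ⟪gradient (f i) x, dsd⟫ ≤ -‖dsd‖ ^ 2 := by
  classical
  have : Nonempty (Fin m) := Fin.pos_iff_nonempty.mp (Nat.pos_of_ne_zero (NeZero.ne m))
  set g : Fin m → E n := fun i => gradient (f i) x with hg
  obtain ⟨lam, hlam, hmin'⟩ :=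
    (isCompact_stdSimplex ℝ (Fin m)).exists_isMinOn
      ⟨Pi.single (Classical.arbitrary (Fin m)) 1, single_mem_stdSimplex ℝ _⟩
      (Continuous.continuousOn (by continuity :
        Continuous fun μ : Fin m → ℝ => ‖∑ i, μ i • g i‖^2/2))
  set u : E n := ∑ i, lam i • g i with hu
  have hminle : ∀ μ ∈ stdSimplex ℝ (Fin m),
      ‖u‖^2/2 ≤ ‖∑ i, μ i • g i‖^2/2 := fun μ hμ => hmin' hμ
  -- key fact 1 : ⟪u, g i⟫ ≥ ‖u‖²
  have key : ∀ i, ‖u‖^2 ≤ ⟪u, g i⟫ := by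
    intro i
    have h0 : 0 ≤ ⟪u, g i - u⟫ := by
      apply aux_inner_nonneg
      intro t ht
      have hmem : (1 - t) • lam + t • (Pi.single i 1 : Fin m → ℝ) ∈ stdSimplex ℝ (Fin m) :=
        (convex_stdSimplex ℝ (Fin m)) hlam (single_mem_stdSimplex ℝ i)
          (by linarith [ht.2]) ht.1 (by ring)
      have hsum : ∑ j, ((1 - t) • lam + t • (Pi.single i 1 : Fin m → ℝ)) j • g j
          = u + t • (g i - u) := by
        have : ∀ j, ((1 - t) • lam + t • (Pi.single i 1 : Fin m → ℝ)) j • g j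
            = (1 - t) • (lam j • g j) + t • ((Pi.single i 1 : Fin m → ℝ) j • g j) := by
          intro j
          simp [Pi.add_apply, Pi.smul_apply, smul_eq_mul, smul_smul, add_smul]
        rw [Finset.sum_congr rfl (fun j _ => this j), Finset.sum_add_distrib,
          ← Finset.smul_sum, ← Finset.smul_sum]
        have hsingle : ∑ j, (Pi.single i 1 : Fin m → ℝ) j • g j = g i := by
          rw [Finset.sum_eq_single i]
          · simp
          · intro b _ hb; simp [Pi.single_apply, hb]
          · simp
        rw [hsingle, ← hu]
        rw [smul_sub, sub_smul, one_smul]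
        abel
      have := hminle _ hmem
      rw [hsum] at this
      linarith
    have : ⟪u, g i - u⟫ = ⟪u, g i⟫ - ‖u‖^2 := by
      rw [inner_sub_right, real_inner_self_eq_norm_sq]
    linarith [h0, this ▸ h0]
  -- maxD lower bound by ⟪u, d⟫
  have hlow : ∀ d : E n, ⟪u, d⟫ ≤ maxD f x d := by
    intro d
    have h1 : ⟪u, d⟫ = ∑ i, lam i * ⟪g i, d⟫ := by
      rw [hu, sum_inner]
      exact Finset.sum_congr rfl fun i _ => real_inner_smul_left _ _ _
    rw [h1]
    calc ∑ i, lam i * ⟪g i, d⟫ ≤ ∑ i, lam i * maxD f x d := by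
          apply Finset.sum_le_sum
          intro i _
          exact mul_le_mul_of_nonneg_left
            (Finset.le_sup' (fun i => ⟪g i, d⟫) (Finset.mem_univ i)) (hlam.1 i)
      _ = maxD f x d := by rw [← Finset.sum_mul, hlam.2, one_mul]
  -- maxD f x (-u) ≤ -‖u‖²
  have hup : maxD f x (-u) ≤ -‖u‖^2 := by
    apply Finset.sup'_le
    intro i _
    rw [inner_neg_right]
    have := key i
    rw [real_inner_comm] at this
    linarith
  have hchain : maxD f x dsd + ‖dsd‖^2/2 ≤ -‖u‖^2/2 := by
    have := hmin (-u)
    rw [norm_neg] at this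
    linarith
  have hlowd := hlow dsd
  have hsq : ‖dsd + u‖^2 = ‖dsd‖^2 + 2 * ⟪u, dsd⟫ + ‖u‖^2 := by
    rw [norm_add_sq_real, real_inner_comm]
  have hzero : dsd = -u := by
    have h2 : ‖dsd + u‖^2 ≤ 0 := by linarith
    have h3 : ‖dsd + u‖ = 0 := by nlinarith [norm_nonneg (dsd + u)]
    exact eq_neg_of_add_eq_zero_left (norm_eq_zero.mp h3)
  refine ⟨lam, hlam, hminle, hzero, ?_, ?_⟩
  · have hnd : ‖dsd‖ = ‖u‖ := by rw [hzero, norm_neg]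
    have hiu : ⟪u, dsd⟫ = -‖u‖^2 := by
      rw [hzero, inner_neg_right, real_inner_self_eq_norm_sq]
    rw [hnd] at hchain
    rw [hθ, hnd]
    linarith [hlowd, hchain, hiu]
  · intro i
    have hki := key i
    rw [real_inner_comm] at hki
    rw [hzero, inner_neg_right, norm_neg]
    linarith
end
end

section
/- Let B ∈ ℝ^{n×n} be symmetric positive definite and x ∈ ℝⁿ. There exists λ ∈ Δ_m minimizing λ ↦ ½ (Σ_{i=1}^m λ_i ∇f_i(x))ᵀ B^{-1} (Σ_{i=1}^m λ_i ∇f_i(x)) over Δ_m such that d_B(x) = −B^{-1} Σ_{i=1}^m λ_i ∇f_i(x), and moreover θ_B(x) = −½ d_B(x)ᵀ B d_B(x). -/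
open RealInnerProductSpace Matrix

noncomputable section

def quad {n : ℕ} (B : Matrix (Fin n) (Fin n) ℝ) (d : E n) : ℝ :=
  ∑ i, ∑ j, d i * B i j * d j

def mulVecE {n : ℕ} (B : Matrix (Fin n) (Fin n) ℝ) (v : E n) : E n :=
  Matrix.toEuclideanLin B v

/-! Auxiliary -/

def Qf {n : ℕ} (M : Matrix (Fin n) (Fin n) ℝ) (u : Fin n → ℝ) : ℝ := u ⬝ᵥ M *ᵥ u

def ee (n : ℕ) : E n ≃ₗ[ℝ] (Fin n → ℝ) := WithLp.linearEquiv 2 ℝ (Fin n → ℝ)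

section aux
variable {n : ℕ} {M : Matrix (Fin n) (Fin n) ℝ}

lemma quad_eq_Qf (M : Matrix (Fin n) (Fin n) ℝ) (d : E n) : quad M d = Qf M (ee n d) := by
  simp [quad, Qf, dotProduct, Matrix.mulVec, Finset.mul_sum, mul_assoc, ee]

lemma inner_eq_dot (u d : E n) : ⟪u, d⟫ = (ee n u) ⬝ᵥ (ee n d) := by
  simp [PiLp.inner_apply, RCLike.inner_apply, conj_trivial, dotProduct, ee, mul_comm]

lemma dot_sym (hM : Mᵀ = M) (u v : Fin n → ℝ) : u ⬝ᵥ M *ᵥ v = v ⬝ᵥ M *ᵥ u := by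
  rw [Matrix.dotProduct_mulVec, ← Matrix.mulVec_transpose, hM, dotProduct_comm]

lemma posdef_sym (hM : M.PosDef) : Mᵀ = M := by simpa [Matrix.IsHermitian] using hM.1

lemma Qf_nonneg (hM : M.PosDef) (u : Fin n → ℝ) : 0 ≤ Qf M u := by
  simpa [Qf] using hM.posSemidef.dotProduct_mulVec_nonneg u

lemma Qf_pos (hM : M.PosDef) {u : Fin n → ℝ} (hu : u ≠ 0) : 0 < Qf M u := by
  simpa [Qf] using hM.dotProduct_mulVec_pos hu

lemma Qf_add (hM : Mᵀ = M) (u v : Fin n → ℝ) :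
    Qf M (u + v) = Qf M u + 2 * (u ⬝ᵥ M *ᵥ v) + Qf M v := by
  have h := dot_sym hM v u
  simp only [Qf, Matrix.mulVec_add, add_dotProduct, dotProduct_add]
  linarith

lemma Qf_smul (c : ℝ) (u : Fin n → ℝ) : Qf M (c • u) = c ^ 2 * Qf M u := by
  simp [Qf, Matrix.mulVec_smul, smul_dotProduct, dotProduct_smul, smul_eq_mul]
  ring

lemma Qf_neg (u : Fin n → ℝ) : Qf M (-u) = Qf M u := by
  simp [Qf, Matrix.mulVec_neg]

lemma Qf_continuous (M : Matrix (Fin n) (Fin n) ℝ) : Continuous (Qf M) := by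
  unfold Qf dotProduct Matrix.mulVec
  exact continuous_finset_sum _ fun i _ =>
    (continuous_apply i).mul
      (continuous_finset_sum _ fun j _ => continuous_const.mul (continuous_apply j))

end aux


/-- dual characterization of the quasi-Newton direction d_B(x). -/
theorem stmt4 {n m : ℕ} [NeZero m] (f : Fin m → E n → ℝ)
    (hf : ∀ i, ContDiff ℝ 1 (f i))
    (B : Matrix (Fin n) (Fin n) ℝ) (hB : B.PosDef)
    (x dB : E n) (θ : ℝ)
    (hmin : ∀ d : E n, maxD f x dB + quad B dB / 2 ≤ maxD f x d + quad B d / 2)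
    (hθ : θ = maxD f x dB + quad B dB / 2) :
    ∃ lam ∈ stdSimplex ℝ (Fin m),
      (∀ μ ∈ stdSimplex ℝ (Fin m),
        quad B⁻¹ (∑ i, lam i • gradient (f i) x) / 2 ≤
          quad B⁻¹ (∑ i, μ i • gradient (f i) x) / 2) ∧
      dB = -(mulVecE B⁻¹ (∑ i, lam i • gradient (f i) x)) ∧
      θ = -(quad B dB) / 2 := by
  classical
  have hA : (B⁻¹).PosDef := hB.inv
  have symB : Bᵀ = B := posdef_sym hB
  have symA : (B⁻¹)ᵀ = B⁻¹ := posdef_sym hA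
  have hBA : B * B⁻¹ = 1 := Matrix.mul_nonsing_inv B hB.det_pos.ne'.isUnit
  set g : Fin m → E n := fun i => gradient (f i) x with hg
  set gv : Fin m → (Fin n → ℝ) := fun i => ee n (g i) with hgv
  set F : (Fin m → ℝ) → (Fin n → ℝ) := fun lam => ∑ i, lam i • gv i with hFdef
  have hF : ∀ lam : Fin m → ℝ, ee n (∑ i, lam i • gradient (f i) x) = F lam := by
    intro lam; simp [hFdef, hgv, hg, map_sum, _root_.map_smul]
  -- existence of dual minimizer
  have hcont : Continuous (fun lam : Fin m → ℝ => Qf B⁻¹ (F lam) / 2) := by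
    refine ((Qf_continuous B⁻¹).comp ?_).div_const 2
    exact continuous_finset_sum _ fun i _ => (continuous_apply i).smul continuous_const
  obtain ⟨lam, hlam, hlmin⟩ := (isCompact_stdSimplex ℝ (Fin m)).exists_isMinOn
    ⟨Pi.single 0 1, single_mem_stdSimplex ℝ 0⟩ hcont.continuousOn
  set G : Fin n → ℝ := F lam with hG
  -- first order condition
  have foc : ∀ i, Qf B⁻¹ G ≤ gv i ⬝ᵥ B⁻¹ *ᵥ G := by
    intro i
    set H : Fin n → ℝ := gv i - G with hH
    have he : 0 ≤ Qf B⁻¹ H := Qf_nonneg hA H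
    have key : ∀ t : ℝ, 0 ≤ t → t ≤ 1 →
        0 ≤ 2 * t * (G ⬝ᵥ B⁻¹ *ᵥ H) + t ^ 2 * Qf B⁻¹ H := by
      intro t ht ht1
      set μ : Fin m → ℝ := fun j => (1 - t) * lam j + t * (if i = j then 1 else 0) with hμ
      have hmem : μ ∈ stdSimplex ℝ (Fin m) := by
        constructor
        · intro j
          have h01 : (0:ℝ) ≤ if i = j then (1:ℝ) else 0 := by positivity
          have h02 := mul_nonneg ht h01
          have h03 := hlam.1 j
          simp only [hμ]
          nlinarith
        · have hsum : ∑ j, μ j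
              = (1 - t) * ∑ j, lam j + t * ∑ j, (if i = j then (1:ℝ) else 0) := by
            simp [hμ, Finset.sum_add_distrib, Finset.mul_sum]
          rw [hsum, hlam.2]
          simp
      have hFμ : F μ = G + t • H := by
        have e1 : F μ = ∑ j, ((1 - t) * lam j) • gv j + ∑ j, (t * (if i = j then (1:ℝ) else 0)) • gv j := by
          simp [hFdef, hμ, add_smul, Finset.sum_add_distrib]
        have e2 : ∑ j, ((1 - t) * lam j) • gv j = (1 - t) • G := by
          rw [hG, hFdef]
          simp [Finset.smul_sum, mul_smul]
        have e3 : ∑ j, (t * (if i = j then (1:ℝ) else 0)) • gv j = t • gv i := by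
          have : ∀ j, (t * (if i = j then (1:ℝ) else 0)) • gv j
              = if i = j then t • gv j else 0 := by
            intro j; split <;> simp
          rw [Finset.sum_congr rfl fun j _ => this j]
          simp
        rw [e1, e2, e3, hH]
        module
      have hq := hlmin hmem
      have hexp : Qf B⁻¹ (G + t • H)
          = Qf B⁻¹ G + 2 * t * (G ⬝ᵥ B⁻¹ *ᵥ H) + t ^ 2 * Qf B⁻¹ H := by
        rw [Qf_add symA, Qf_smul]
        have : G ⬝ᵥ B⁻¹ *ᵥ (t • H) = t * (G ⬝ᵥ B⁻¹ *ᵥ H) := by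
          rw [Matrix.mulVec_smul]
          simp [dotProduct_smul, smul_eq_mul]
        rw [this]; ring
      simp only [Set.mem_setOf_eq, hFμ, hexp] at hq
      linarith
    have hc : 0 ≤ G ⬝ᵥ B⁻¹ *ᵥ H := by
      by_contra hcon
      push_neg at hcon
      set c := G ⬝ᵥ B⁻¹ *ᵥ H with hcc
      set e := Qf B⁻¹ H with hee
      have he1 : (0:ℝ) < e + 1 := by linarith
      have ht0 : 0 < min 1 (-c / (e + 1)) :=
        lt_min one_pos (div_pos (by linarith) he1)
      have h1 : min 1 (-c / (e + 1)) ≤ 1 := min_le_left _ _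
      have h2 : min 1 (-c / (e + 1)) ≤ -c / (e + 1) := min_le_right _ _
      have hk := key _ (le_of_lt ht0) h1
      set t := min 1 (-c / (e + 1)) with htt
      have h3 : t * (e + 1) ≤ -c := by
        rw [div_eq_mul_inv] at h2
        have h4 := mul_le_mul_of_nonneg_right h2 he1.le
        rwa [mul_assoc, inv_mul_cancel₀ he1.ne', mul_one] at h4
      nlinarith [hk, mul_le_mul_of_nonneg_left h3 ht0.le, mul_pos ht0 ht0,
        mul_pos ht0 (neg_pos.2 hcon)]
    have hsplit : G ⬝ᵥ B⁻¹ *ᵥ H = G ⬝ᵥ B⁻¹ *ᵥ gv i - Qf B⁻¹ G := by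
      rw [hH, Matrix.mulVec_sub, dotProduct_sub]
      simp [Qf]
    rw [dot_sym symA]
    rw [hsplit] at hc
    linarith
  -- convex combination bound
  have hcomb : ∀ d : E n, G ⬝ᵥ ee n d ≤ maxD f x d := by
    intro d
    have h1 : G ⬝ᵥ ee n d = ∑ i, lam i * (gv i ⬝ᵥ ee n d) := by
      rw [hG, hFdef]
      simp only [dotProduct, Finset.sum_apply, Pi.smul_apply, smul_eq_mul,
        Finset.sum_mul, Finset.mul_sum, mul_assoc]
      exact Finset.sum_comm
    have h2 : ∀ i : Fin m, gv i ⬝ᵥ ee n d ≤ maxD f x d := by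
      intro i
      rw [show gv i ⬝ᵥ ee n d = ⟪gradient (f i) x, d⟫ from (inner_eq_dot _ _).symm]
      exact Finset.le_sup' (fun i => ⟪gradient (f i) x, d⟫) (Finset.mem_univ i)
    calc G ⬝ᵥ ee n d = ∑ i, lam i * (gv i ⬝ᵥ ee n d) := h1
      _ ≤ ∑ i : Fin m, lam i * maxD f x d :=
          Finset.sum_le_sum fun i _ => mul_le_mul_of_nonneg_left (h2 i) (hlam.1 i)
      _ = maxD f x d := by rw [← Finset.sum_mul, hlam.2, one_mul]
  -- optimal direction
  set ds : E n := (ee n).symm (-(B⁻¹ *ᵥ G)) with hdsdef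
  have hds : ee n ds = -(B⁻¹ *ᵥ G) := (ee n).apply_symm_apply _
  have hmaxds : maxD f x ds = -(Qf B⁻¹ G) := by
    apply le_antisymm
    · apply Finset.sup'_le
      intro i _
      rw [show ⟪gradient (f i) x, ds⟫ = gv i ⬝ᵥ ee n ds from inner_eq_dot _ _, hds]
      have h5 := foc i
      have hnn : gv i ⬝ᵥ -(B⁻¹ *ᵥ G) = -(gv i ⬝ᵥ B⁻¹ *ᵥ G) := by
        simp [dotProduct_neg]
      rw [hnn]
      linarith
    · have h6 := hcomb ds
      rw [hds] at h6
      have h4 : G ⬝ᵥ -(B⁻¹ *ᵥ G) = -(Qf B⁻¹ G) := by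
        simp [Qf, dotProduct_neg]
      rw [h4] at h6
      exact h6
  have hqds : quad B ds = Qf B⁻¹ G := by
    rw [quad_eq_Qf, hds, Qf_neg]
    unfold Qf
    rw [Matrix.mulVec_mulVec, hBA, Matrix.one_mulVec, dotProduct_comm]
  have hlow : ∀ d : E n, -(Qf B⁻¹ G) / 2 ≤ maxD f x d + quad B d / 2 := by
    intro d
    have h0 : 0 ≤ Qf B (ee n d + B⁻¹ *ᵥ G) := Qf_nonneg hB _
    rw [Qf_add symB] at h0
    have e1 : ee n d ⬝ᵥ B *ᵥ (B⁻¹ *ᵥ G) = ee n d ⬝ᵥ G := by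
      rw [Matrix.mulVec_mulVec, hBA, Matrix.one_mulVec]
    have e2 : Qf B (B⁻¹ *ᵥ G) = Qf B⁻¹ G := by
      unfold Qf
      rw [Matrix.mulVec_mulVec, hBA, Matrix.one_mulVec, dotProduct_comm]
    rw [e1, e2] at h0
    have h3 := hcomb d
    have h4 : G ⬝ᵥ ee n d = ee n d ⬝ᵥ G := dotProduct_comm _ _
    have h5 : quad B d = Qf B (ee n d) := quad_eq_Qf _ _
    linarith
  have hφds : maxD f x ds + quad B ds / 2 = -(Qf B⁻¹ G) / 2 := by
    rw [hmaxds, hqds]; ring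
  have hφdB : maxD f x dB + quad B dB / 2 = -(Qf B⁻¹ G) / 2 :=
    le_antisymm (hφds ▸ hmin ds) (hlow dB)
  -- uniqueness
  have huv : ee n dB = ee n ds := by
    by_contra hne
    set u : Fin n → ℝ := ee n dB with hu
    set v : Fin n → ℝ := ee n ds with hv
    have hsub : u - v ≠ 0 := sub_ne_zero.2 hne
    have hpos : 0 < Qf B (u - v) := Qf_pos hB hsub
    set mid : E n := (2⁻¹ : ℝ) • (dB + ds) with hmid
    have hmax : maxD f x mid ≤ (maxD f x dB + maxD f x ds) / 2 := by
      apply Finset.sup'_le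
      intro i _
      have hi : ⟪gradient (f i) x, mid⟫
          = (⟪gradient (f i) x, dB⟫ + ⟪gradient (f i) x, ds⟫) / 2 := by
        rw [hmid, real_inner_smul_right, inner_add_right]; ring
      rw [hi]
      have b1 := Finset.le_sup' (fun i => ⟪gradient (f i) x, dB⟫) (Finset.mem_univ i)
      have b2 := Finset.le_sup' (fun i => ⟪gradient (f i) x, ds⟫) (Finset.mem_univ i)
      unfold maxD
      linarith
    have hqmid : quad B mid = (Qf B u + 2 * (u ⬝ᵥ B *ᵥ v) + Qf B v) / 4 := by
      rw [quad_eq_Qf]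
      have he : ee n mid = (2⁻¹ : ℝ) • (u + v) := by
        rw [hmid, _root_.map_smul, map_add]
      rw [he, Qf_smul, Qf_add symB]
      ring
    have hsubQ : Qf B (u - v) = Qf B u - 2 * (u ⬝ᵥ B *ᵥ v) + Qf B v := by
      rw [sub_eq_add_neg, Qf_add symB, Qf_neg]
      simp only [Matrix.mulVec_neg, dotProduct_neg]
      ring
    have hm := hmin mid
    have q1 : quad B dB = Qf B u := quad_eq_Qf _ _
    have q2 : quad B ds = Qf B v := quad_eq_Qf _ _
    linarith
  have hdBds : dB = ds := (ee n).injective huv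
  refine ⟨lam, hlam, ?_, ?_, ?_⟩
  · intro μ hμ
    have := hlmin hμ
    simpa only [quad_eq_Qf, hF, Set.mem_setOf_eq] using this
  · apply (ee n).injective
    rw [huv, hds, map_neg]
    have h2 : (ee n) (mulVecE B⁻¹ (∑ i, lam i • gradient (f i) x)) = B⁻¹ *ᵥ G := by
      rw [show (ee n) (mulVecE B⁻¹ (∑ i, lam i • gradient (f i) x)) =
        B⁻¹ *ᵥ (ee n (∑ i, lam i • gradient (f i) x)) from rfl, hF lam]
      try rw [hG]
    rw [h2]
  · have h1 : quad B dB = Qf B⁻¹ G := by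
      rw [hdBds]
      try exact hqds
    rw [hθ, hφdB]
    linarith [h1]
end
end

section
/- Let B ∈ ℝ^{n×n} be symmetric positive definite and x ∈ ℝⁿ. Then D(x, d_B(x)) ≤ −d_B(x)ᵀ B d_B(x). -/
open RealInnerProductSpace

noncomputable section

lemma maxD_smul {n m : ℕ} [NeZero m] (f : Fin m → E n → ℝ) (x d : E n)
    {t : ℝ} (ht : 0 ≤ t) : maxD f x (t • d) = t * maxD f x d := by
  unfold maxD
  obtain ⟨i, hi, h⟩ := Finset.exists_mem_eq_sup' (Finset.univ_nonempty)
    (fun i => ⟪gradient (f i) x, d⟫)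
  apply le_antisymm
  · apply Finset.sup'_le
    intro j _
    rw [real_inner_smul_right]
    exact mul_le_mul_of_nonneg_left
      (Finset.le_sup' (fun i => ⟪gradient (f i) x, d⟫) (Finset.mem_univ j)) ht
  · rw [h]
    calc t * ⟪gradient (f i) x, d⟫ = ⟪gradient (f i) x, t • d⟫ := by
          rw [real_inner_smul_right]
      _ ≤ _ := Finset.le_sup' (fun i => ⟪gradient (f i) x, t • d⟫) hi

lemma quad_smul {n : ℕ} (B : Matrix (Fin n) (Fin n) ℝ) (d : E n) (t : ℝ) :
    quad B (t • d) = t ^ 2 * quad B d := by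
  unfold quad
  rw [Finset.mul_sum]
  refine Finset.sum_congr rfl fun i _ => ?_
  rw [Finset.mul_sum]
  refine Finset.sum_congr rfl fun j _ => ?_
  simp [PiLp.smul_apply, smul_eq_mul]
  ring

lemma quad_nonneg {n : ℕ} {B : Matrix (Fin n) (Fin n) ℝ} (hB : B.PosDef)
    (d : E n) : 0 ≤ quad B d := by
  have h := hB.posSemidef.dotProduct_mulVec_nonneg (fun i => d i)
  simpa [dotProduct, Matrix.mulVec, quad, Finset.mul_sum, mul_assoc,
    mul_comm, mul_left_comm] using h

/-- D(x, d_B(x)) ≤ − d_B(x)ᵀ B d_B(x). -/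
theorem stmt5 {n m : ℕ} [NeZero m] (f : Fin m → E n → ℝ)
    (hf : ∀ i, ContDiff ℝ 1 (f i))
    (B : Matrix (Fin n) (Fin n) ℝ) (hB : B.PosDef)
    (x dB : E n)
    (hmin : ∀ d : E n, maxD f x dB + quad B dB / 2 ≤ maxD f x d + quad B d / 2) :
    maxD f x dB ≤ -(quad B dB) := by
  set M := maxD f x dB with hM
  set Q := quad B dB with hQ
  have hQ0 : 0 ≤ Q := quad_nonneg hB dB
  have key : ∀ ε : ℝ, 0 < ε → ε ≤ 1 → M ≤ -Q + Q * ε / 2 := by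
    intro ε hε hε1
    have h := hmin ((1 - ε) • dB)
    rw [maxD_smul f x dB (by linarith), quad_smul] at h
    nlinarith [h]
  rcases eq_or_lt_of_le hQ0 with hQeq | hQpos
  · have := key 1 one_pos le_rfl
    linarith
  · refine le_of_forall_pos_le_add fun δ hδ => ?_
    have hε : 0 < min 1 (2 * δ / Q) := by positivity
    have h := key (min 1 (2 * δ / Q)) hε (min_le_left _ _)
    have h3 : Q * min 1 (2 * δ / Q) ≤ 2 * δ := by
      calc Q * min 1 (2 * δ / Q) ≤ Q * (2 * δ / Q) :=
            mul_le_mul_of_nonneg_left (min_le_right _ _) hQpos.le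
        _ = 2 * δ := by field_simp
    linarith
end
end

section
/- Let B ∈ ℝ^{n×n} be symmetric positive definite and x ∈ ℝⁿ. Then: (a) if d_B(x) ≠ 0 then d_B(x) is a descent direction for f at x; (b) the following statements are equivalent: (i) x is not Pareto critical; (ii) d_B(x) ≠ 0; (iii) θ_B(x) < 0. -/
open RealInnerProductSpace

noncomputable section

lemma maxD_zero {n m : ℕ} [NeZero m] (f : Fin m → E n → ℝ) (x : E n) :
    maxD f x 0 = 0 := by
  unfold maxD
  simp

lemma quad_zero {n : ℕ} (B : Matrix (Fin n) (Fin n) ℝ) : quad B 0 = 0 := by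
  unfold quad
  simp

lemma quad_pos {n : ℕ} {B : Matrix (Fin n) (Fin n) ℝ} (hB : B.PosDef)
    {d : E n} (hd : d ≠ 0) : 0 < quad B d := by
  have hd' : (d : Fin n → ℝ) ≠ 0 := fun h => hd (PiLp.ext fun i => by simpa using congrFun h i)
  set d' : Fin n → ℝ := (d : Fin n → ℝ) with hd'def
  have h1 := hB.dotProduct_mulVec_pos hd'
  have h2 : dotProduct (star d') (Matrix.mulVec B d') = quad B d := by
    unfold quad
    simp only [dotProduct, Matrix.mulVec, Pi.star_apply, star_trivial,
      Finset.mul_sum, hd'def]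
    refine Finset.sum_congr rfl fun i _ => Finset.sum_congr rfl fun j _ => by ring
  rwa [h2] at h1

/-- descent property of d_B(x) and equivalences with Pareto criticality. -/
theorem stmt6 {n m : ℕ} [NeZero m] (f : Fin m → E n → ℝ)
    (hf : ∀ i, ContDiff ℝ 1 (f i))
    (B : Matrix (Fin n) (Fin n) ℝ) (hB : B.PosDef)
    (x dB : E n) (θ : ℝ)
    (hmin : ∀ d : E n, maxD f x dB + quad B dB / 2 ≤ maxD f x d + quad B d / 2)
    (hθ : θ = maxD f x dB + quad B dB / 2) :
    (dB ≠ 0 → ∀ i, ⟪gradient (f i) x, dB⟫ < 0) ∧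
    (¬ ParetoCritical f x ↔ dB ≠ 0) ∧ (¬ ParetoCritical f x ↔ θ < 0) := by
  subst hθ
  have h0 : maxD f x dB + quad B dB / 2 ≤ 0 := by
    have := hmin 0
    rwa [maxD_zero, quad_zero, zero_add, zero_div] at this
  have descent : dB ≠ 0 → ∀ i, ⟪gradient (f i) x, dB⟫ < 0 := by
    intro hne i
    have hq : 0 < quad B dB := quad_pos hB hne
    have hle : ⟪gradient (f i) x, dB⟫ ≤ maxD f x dB := by
      unfold maxD
      exact Finset.le_sup' (fun j => ⟪gradient (f j) x, dB⟫) (Finset.mem_univ i)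
    linarith
  have hθneg : dB ≠ 0 → maxD f x dB + quad B dB / 2 < 0 := by
    intro hne
    have hq : 0 < quad B dB := quad_pos hB hne
    have h2 := hmin ((1/2 : ℝ) • dB)
    rw [maxD_smul f x dB (by norm_num), quad_smul] at h2
    nlinarith
  have npc_of : dB ≠ 0 → ¬ ParetoCritical f x := by
    intro hne hpc
    obtain ⟨i, hi⟩ := hpc dB
    exact absurd (descent hne i) (not_lt.2 hi)
  have of_npc : ¬ ParetoCritical f x → maxD f x dB + quad B dB / 2 < 0 := by
    intro hpc
    unfold ParetoCritical at hpc
    push_neg at hpc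
    obtain ⟨d, hd⟩ := hpc
    have hdne : d ≠ 0 := by
      intro h
      have := hd (0 : Fin m)
      rw [h, inner_zero_right] at this
      exact lt_irrefl _ this
    have hq : 0 < quad B d := quad_pos hB hdne
    have hM : maxD f x d < 0 := by
      unfold maxD
      exact (Finset.sup'_lt_iff Finset.univ_nonempty).2 fun i _ => hd i
    set t := -maxD f x d / quad B d with ht
    have ht0 : 0 < t := div_pos (neg_pos.2 hM) hq
    have h2 := hmin (t • d)
    rw [maxD_smul f x d ht0.le, quad_smul] at h2
    have htq : t * quad B d = -maxD f x d := by
      rw [ht, div_mul_cancel₀ _ hq.ne']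
    nlinarith
  have ne_of_neg : maxD f x dB + quad B dB / 2 < 0 → dB ≠ 0 := by
    intro h hne
    rw [hne, maxD_zero, quad_zero, zero_add, zero_div] at h
    exact lt_irrefl _ h
  exact ⟨descent, ⟨fun h => ne_of_neg (of_npc h), npc_of⟩,
    ⟨of_npc, fun h => npc_of (ne_of_neg h)⟩⟩
end
end

section
/- Suppose each f_i is continuously differentiable and for every z ∈ ℝⁿ the level set {x ∈ ℝⁿ : f_i(x) ≤ f_i(z) for all i} is bounded. Let x ∈ ℝⁿ, let d be a descent direction for f at x, and let 0 < σ₁ < σ₂ < 1. Then there exist 0 < α₁ < α₂ such that every α ∈ [α₁, α₂] satisfies the Wolfe conditions at (x, d). -/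
open RealInnerProductSpace

noncomputable section

/-- existence of an interval of step sizes satisfying the Wolfe conditions. -/
theorem stmt10 {n m : ℕ} [NeZero m] (f : Fin m → E n → ℝ)
    (hf : ∀ i, ContDiff ℝ 1 (f i))
    (hlevel : ∀ z : E n, Bornology.IsBounded {w : E n | ∀ i, f i w ≤ f i z})
    (x d : E n) (hdesc : ∀ i, ⟪gradient (f i) x, d⟫ < 0)
    (σ₁ σ₂ : ℝ) (hσ1 : 0 < σ₁) (hσ12 : σ₁ < σ₂) (hσ2 : σ₂ < 1) :
    ∃ α₁ α₂ : ℝ, 0 < α₁ ∧ α₁ < α₂ ∧ ∀ α ∈ Set.Icc α₁ α₂,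
      (∀ i, f i (x + α • d) ≤ f i x + σ₁ * α * maxD f x d) ∧
      σ₂ * maxD f x d ≤ maxD f (x + α • d) d := by
  classical
  set D := maxD f x d with hDdef
  -- ψ i α : directional derivative of f i along the ray at parameter α
  set ψ : Fin m → ℝ → ℝ := fun i α => fderiv ℝ (f i) (x + α • d) d with hψdef
  have hgrad : ∀ i (y : E n), ⟪gradient (f i) y, d⟫ = fderiv ℝ (f i) y d := by
    intro i y; simp [gradient, InnerProductSpace.toDual_symm_apply]
  have hψcont : ∀ i, Continuous (ψ i) := by
    intro i
    exact ((ContinuousLinearMap.apply ℝ ℝ d).continuous.comp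
      ((hf i).continuous_fderiv one_ne_zero)).comp
      (continuous_const.add (continuous_id.smul continuous_const) : Continuous (fun α : ℝ => x + α • d))
  have hderiv : ∀ i (α : ℝ), HasDerivAt (fun t : ℝ => f i (x + t • d)) (ψ i α) α := by
    intro i α
    have hline : HasDerivAt (fun t : ℝ => x + t • d) d α := by
      simpa using ((hasDerivAt_id α).smul_const d).const_add x
    exact (((hf i).differentiable one_ne_zero).differentiableAt.hasFDerivAt).comp_hasDerivAt α hline
  have hφcont : ∀ i, Continuous (fun t : ℝ => f i (x + t • d)) := by
    intro i
    exact ((hf i).continuous).comp (continuous_const.add (continuous_id.smul continuous_const))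
  -- h α = maxD f (x + α • d) d
  set h : ℝ → ℝ := fun α =>
    Finset.univ.sup' Finset.univ_nonempty (fun i => ψ i α) with hhdef
  have hmaxD : ∀ α : ℝ, maxD f (x + α • d) d = h α := by
    intro α
    simp only [maxD, hhdef]
    exact Finset.sup'_congr _ rfl (fun i _ => hgrad i _)
  have hhcont : Continuous h :=
    Continuous.finset_sup'_apply Finset.univ_nonempty (fun i _ => hψcont i)
  have hψle : ∀ i α, ψ i α ≤ h α := fun i α =>
    Finset.le_sup' (fun j => ψ j α) (Finset.mem_univ i)
  have h0 : h 0 = D := by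
    rw [← hmaxD 0, show x + (0:ℝ) • d = x by simp]
  have hD : D < 0 := by
    simp only [hDdef, maxD]
    exact (Finset.sup'_lt_iff Finset.univ_nonempty).mpr (fun i _ => hdesc i)
  have hd0 : d ≠ 0 := by
    intro hd
    have := hdesc ⟨0, Nat.pos_of_ne_zero (NeZero.ne m)⟩
    rw [hd] at this
    simp at this
  have hσ1D : D < σ₁ * D := by nlinarith
  have hσ2D : σ₂ * D < σ₁ * D := by nlinarith
  -- Step 1: ∃ ε > 0, h < σ₁ D on [0, ε]
  obtain ⟨δ₀, hδ₀pos, hδ₀⟩ : ∃ δ₀ > 0, ∀ α : ℝ, |α| < δ₀ → h α < σ₁ * D := by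
    have hU : IsOpen (h ⁻¹' Set.Iio (σ₁ * D)) := isOpen_Iio.preimage hhcont
    have h0U : (0:ℝ) ∈ h ⁻¹' Set.Iio (σ₁ * D) := by
      simp only [Set.mem_preimage, Set.mem_Iio, h0]; exact hσ1D
    obtain ⟨δ₀, hδ₀pos, hball⟩ := Metric.isOpen_iff.mp hU 0 h0U
    exact ⟨δ₀, hδ₀pos, fun α hα => hball (by simpa [Real.dist_eq] using hα)⟩
  set ε := δ₀ / 2 with hεdef
  have hεpos : 0 < ε := by positivity
  have hεsmall : ∀ α : ℝ, 0 ≤ α → α ≤ ε → h α < σ₁ * D := by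
    intro α h0α hαε
    exact hδ₀ α (by rw [abs_of_nonneg h0α]; linarith)
  -- Step 2: strict Armijo on (0, ε]
  have harmijo_small : ∀ α : ℝ, 0 < α → α ≤ ε → ∀ i,
      f i (x + α • d) < f i x + σ₁ * α * D := by
    intro α hα hαε i
    obtain ⟨ξ, hξ, hξeq⟩ := exists_hasDerivAt_eq_slope (fun t : ℝ => f i (x + t • d)) (ψ i)
      hα ((hφcont i).continuousOn) (fun t _ => hderiv i t)
    have hξmem := hξ
    rw [Set.mem_Ioo] at hξmem
    have h1 : ψ i ξ < σ₁ * D :=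
      lt_of_le_of_lt (hψle i ξ) (hεsmall ξ hξmem.1.le (le_trans hξmem.2.le hαε))
    rw [hξeq] at h1
    rw [div_lt_iff₀ (by linarith : (0:ℝ) < α - 0)] at h1
    have h3 : f i (x + (0:ℝ) • d) = f i x := by simp
    rw [h3] at h1
    nlinarith [h1]
  -- Step 3: the Armijo condition fails for some large α.
  obtain ⟨β, hβε, iβ, hiβ⟩ : ∃ β : ℝ, ε ≤ β ∧ ∃ i, f i x + σ₁ * β * D ≤ f i (x + β • d) := by
    obtain ⟨R, hR⟩ := isBounded_iff_forall_norm_le.mp (hlevel x)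
    have hdpos : (0:ℝ) < ‖d‖ := norm_pos_iff.mpr hd0
    set β := max ε ((R + ‖x‖ + 1) / ‖d‖) with hβdef
    have hβε : ε ≤ β := le_max_left _ _
    have hβpos : 0 < β := lt_of_lt_of_le hεpos hβε
    refine ⟨β, hβε, ?_⟩
    have hnotin : x + β • d ∉ {w : E n | ∀ i, f i w ≤ f i x} := by
      intro hmem
      have := hR _ hmem
      have h1 : (R + ‖x‖ + 1) / ‖d‖ ≤ β := le_max_right _ _
      have h2 : R + ‖x‖ + 1 ≤ β * ‖d‖ := by
        rw [div_le_iff₀ hdpos] at h1; linarith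
      have hsub : x + β • d - x = β • d := by abel
      have h3 : ‖β • d‖ ≤ ‖x + β • d‖ + ‖x‖ := by
        have h3' := norm_sub_le (x + β • d) x
        rwa [hsub] at h3'

      have h4 : ‖β • d‖ = β * ‖d‖ := by
        rw [norm_smul, Real.norm_eq_abs, abs_of_pos hβpos]
      linarith
    simp only [Set.mem_setOf_eq, not_forall, not_le] at hnotin
    obtain ⟨i, hi⟩ := hnotin
    refine ⟨i, ?_⟩
    have : σ₁ * β * D < 0 := by
      have : 0 < σ₁ * β := by positivity
      nlinarith
    linarith
  -- Step 4: α* = infimum of failures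
  set A : Set ℝ := {α : ℝ | ε ≤ α ∧ ∃ i, f i x + σ₁ * α * D ≤ f i (x + α • d)} with hAdef
  have hAne : A.Nonempty := ⟨β, hβε, iβ, hiβ⟩
  have hAbdd : BddBelow A := ⟨ε, fun a ha => ha.1⟩
  have hAclosed : IsClosed A := by
    have : A = Set.Ici ε ∩ ⋃ i : Fin m,
        {α : ℝ | f i x + σ₁ * α * D ≤ f i (x + α • d)} := by
      ext α
      simp [hAdef, Set.mem_iUnion]
    rw [this]
    refine isClosed_Ici.inter (isClosed_iUnion_of_finite (fun i => ?_))
    exact isClosed_le (by fun_prop) ((hφcont i).comp continuous_id')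
  set αs := sInf A with hαsdef
  have hαsmem : αs ∈ A := hAclosed.csInf_mem hAne hAbdd
  have hαsε : ε ≤ αs := hαsmem.1
  have hαspos : 0 < αs := lt_of_lt_of_le hεpos hαsε
  -- strict Armijo on (0, αs)
  have harmijo : ∀ α : ℝ, 0 < α → α < αs → ∀ i,
      f i (x + α • d) < f i x + σ₁ * α * D := by
    intro α hα hααs i
    by_cases hcase : α ≤ ε
    · exact harmijo_small α hα hcase i
    · push_neg at hcase
      have hnA : α ∉ A := fun hmem => absurd (csInf_le hAbdd hmem) (not_le.mpr hααs)
      simp only [hAdef, Set.mem_setOf_eq, not_and, not_exists, not_le] at hnA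
      exact hnA hcase.le i
  -- Step 5: MVT gives ξ ∈ (0, αs) with h ξ ≥ σ₁ D > σ₂ D
  obtain ⟨i₀, hi₀⟩ := hαsmem.2
  obtain ⟨ξ, hξ, hξeq⟩ := exists_hasDerivAt_eq_slope (fun t : ℝ => f i₀ (x + t • d)) (ψ i₀)
    hαspos ((hφcont i₀).continuousOn) (fun t _ => hderiv i₀ t)
  rw [Set.mem_Ioo] at hξ
  have hhξ : σ₂ * D < h ξ := by
    have h4 : σ₁ * D ≤ ψ i₀ ξ := by
      rw [hξeq, le_div_iff₀ (by linarith : (0:ℝ) < αs - 0)]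
      have h3 : f i₀ (x + (0:ℝ) • d) = f i₀ x := by simp
      rw [h3]
      nlinarith [hi₀]
    exact lt_of_lt_of_le hσ2D (le_trans h4 (hψle i₀ ξ))
  -- Step 6: choose the interval around ξ
  obtain ⟨δ₁, hδ₁pos, hball⟩ : ∃ δ₁ > 0, ∀ α : ℝ, |α - ξ| < δ₁ → σ₂ * D < h α := by
    have hU : IsOpen (h ⁻¹' Set.Ioi (σ₂ * D)) := isOpen_Ioi.preimage hhcont
    obtain ⟨δ₁, hδ₁pos, hb⟩ := Metric.isOpen_iff.mp hU ξ hhξ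
    exact ⟨δ₁, hδ₁pos, fun α hα => hb (by simpa [Real.dist_eq] using hα)⟩
  set δ := min δ₁ (min ξ (αs - ξ)) with hδdef
  have hδpos : 0 < δ := by
    apply lt_min hδ₁pos
    exact lt_min hξ.1 (by linarith [hξ.2])
  refine ⟨ξ - δ/2, ξ + δ/2, by
      have : δ ≤ ξ := le_trans (min_le_right _ _) (min_le_left _ _)
      linarith, by linarith, ?_⟩
  intro α hα
  rw [Set.mem_Icc] at hα
  have hδξ : δ ≤ ξ := le_trans (min_le_right _ _) (min_le_left _ _)
  have hδαs : δ ≤ αs - ξ := le_trans (min_le_right _ _) (min_le_right _ _)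
  have hαpos : 0 < α := by linarith
  have hααs : α < αs := by linarith
  constructor
  · exact fun i => (harmijo α hαpos hααs i).le
  · rw [hmaxD]
    refine (hball α ?_).le
    have hδδ₁ : δ ≤ δ₁ := min_le_left _ _
    rw [abs_sub_lt_iff]
    constructor <;> linarith
end
end

section
/- Suppose each ∇f_i is Lipschitz continuous with constant L_i, and fix x₀ ∈ ℝⁿ and f_low ∈ ℝ. Let B ∈ ℝ^{n×n} be symmetric positive definite, let x ∈ ℝⁿ and d ≠ 0 satisfy D(x,d) ≤ −dᵀBd, let σ₁ ∈ (0,1) and α ≥ α₀ > 0, set x' := x + α d and s := x' − x, and assume the sufficient decrease condition f_i(x') ≤ f_i(x) + σ₁ α D(x,d) holds for all i, together with f_i(x) ≤ f_i(x₀) and f_i(x') ≥ f_low for all i. Let λ ∈ Δ_m, y := Σ_{i=1}^m λ_i (∇f_i(x') − ∇f_i(x)), m̂ := max(−yᵀs/‖s‖², 0) + Σ_{i=1}^m λ_i (f_i(x) − f_i(x')), and γ := y + m̂ s. Then γᵀs/‖s‖² ≥ σ₁ α₀ (dᵀBd) and ‖γ‖²/(γᵀs) ≤ (2 max_{1≤i≤m}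 L_i + max_{1≤i≤m}(f_i(x₀) − f_low))² / (σ₁ α₀ (dᵀBd)). -/
open RealInnerProductSpace

noncomputable section

set_option maxHeartbeats 1000000 in
/-- curvature-type bounds for γ produced by the modified update. -/
theorem stmt12 {n m : ℕ} [NeZero m] (f : Fin m → E n → ℝ)
    (hf : ∀ i, ContDiff ℝ 1 (f i))
    (L : Fin m → NNReal) (hL : ∀ i, LipschitzWith (L i) (fun z => gradient (f i) z))
    (x₀ : E n) (flow : ℝ)
    (B : Matrix (Fin n) (Fin n) ℝ) (hB : B.PosDef)
    (x d : E n) (hd0 : d ≠ 0) (hD : maxD f x d ≤ -(quad B d))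
    (σ₁ : ℝ) (hσ₁ : σ₁ ∈ Set.Ioo (0 : ℝ) 1)
    (α α₀ : ℝ) (hα₀ : 0 < α₀) (hα : α₀ ≤ α)
    (x' : E n) (hx' : x' = x + α • d) (s : E n) (hss : s = x' - x)
    (hdec : ∀ i, f i x' ≤ f i x + σ₁ * α * maxD f x d)
    (hbound : ∀ i, f i x ≤ f i x₀) (hlow : ∀ i, flow ≤ f i x')
    (lam : Fin m → ℝ) (hlam : lam ∈ stdSimplex ℝ (Fin m))
    (y : E n) (hy : y = ∑ i, lam i • (gradient (f i) x' - gradient (f i) x))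
    (mh : ℝ) (hmh : mh = max (-(⟪y, s⟫ / ‖s‖ ^ 2)) 0 + ∑ i, lam i * (f i x - f i x'))
    (γ : E n) (hγ : γ = y + mh • s) :
    σ₁ * α₀ * quad B d ≤ ⟪γ, s⟫ / ‖s‖ ^ 2 ∧
    ‖γ‖ ^ 2 / ⟪γ, s⟫ ≤
      (2 * (Finset.univ.sup' Finset.univ_nonempty fun i => (L i : ℝ)) +
        Finset.univ.sup' Finset.univ_nonempty fun i => f i x₀ - flow) ^ 2 /
      (σ₁ * α₀ * quad B d) := by
  obtain ⟨hσ0, hσ1'⟩ := hσ₁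
  obtain ⟨hlam0, hlam1⟩ := hlam
  have hα' : 0 < α := lt_of_lt_of_le hα₀ hα
  -- quad B d > 0
  have hq : 0 < quad B d := by
    have h := hB.dotProduct_mulVec_pos (x := WithLp.ofLp d) (fun h => hd0 (by simpa using h))
    refine lt_of_lt_of_eq h ?_
    simp only [quad, dotProduct, Matrix.mulVec, star_trivial, Pi.star_apply,
      Finset.mul_sum]
    exact Finset.sum_congr rfl fun i _ => Finset.sum_congr rfl fun j _ => by ring
  -- s = α • d ≠ 0
  have hsd : s = α • d := by rw [hss, hx']; abel
  have hs0 : s ≠ 0 := by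
    rw [hsd]; exact smul_ne_zero (ne_of_gt hα') hd0
  have hns : 0 < ‖s‖ := norm_pos_iff.mpr hs0
  have hns2 : 0 < ‖s‖ ^ 2 := by positivity
  set M : ℝ := ∑ i, lam i * (f i x - f i x') with hM
  -- decrease: each f i x - f i x' ≥ σ₁ α quad
  have hdec' : ∀ i, σ₁ * α * quad B d ≤ f i x - f i x' := by
    intro i
    have h1 := hdec i
    have h2 : σ₁ * α * maxD f x d ≤ σ₁ * α * (-(quad B d)) := by
      apply mul_le_mul_of_nonneg_left hD (by positivity)
    nlinarith
  have hM1 : σ₁ * α * quad B d ≤ M := by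
    calc σ₁ * α * quad B d = ∑ i, lam i * (σ₁ * α * quad B d) := by
          rw [← Finset.sum_mul, hlam1, one_mul]
      _ ≤ M := Finset.sum_le_sum fun i _ =>
          mul_le_mul_of_nonneg_left (hdec' i) (hlam0 i)
  have hc : 0 < σ₁ * α₀ * quad B d := by positivity
  have hcM : σ₁ * α₀ * quad B d ≤ M := by
    refine le_trans ?_ hM1
    have := mul_le_mul_of_nonneg_right (mul_le_mul_of_nonneg_left hα (le_of_lt hσ0)) (le_of_lt hq)
    linarith
  -- inner product of γ with s
  have hinner : ⟪γ, s⟫ = ⟪y, s⟫ + mh * ‖s‖ ^ 2 := by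
    rw [hγ, inner_add_left, real_inner_smul_left, real_inner_self_eq_norm_sq]
  have hinner' : ⟪γ, s⟫ / ‖s‖ ^ 2 = ⟪y, s⟫ / ‖s‖ ^ 2 + mh := by
    field_simp [hinner]
    rw [hinner]; ring
  set t : ℝ := ⟪y, s⟫ / ‖s‖ ^ 2 with ht
  have hkey : ⟪γ, s⟫ / ‖s‖ ^ 2 = (t + max (-t) 0) + M := by
    rw [hinner', hmh]; ring
  have htpos : 0 ≤ t + max (-t) 0 := by
    have := le_max_left (-t) 0; linarith
  have part1 : σ₁ * α₀ * quad B d ≤ ⟪γ, s⟫ / ‖s‖ ^ 2 := by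
    rw [hkey]; linarith
  refine ⟨part1, ?_⟩
  -- Lmax bound
  set Lmax : ℝ := Finset.univ.sup' Finset.univ_nonempty fun i => (L i : ℝ) with hLmax
  set Mmax : ℝ := Finset.univ.sup' Finset.univ_nonempty fun i => f i x₀ - flow with hMmax
  have hLmax0 : 0 ≤ Lmax := by
    obtain ⟨i⟩ := Finset.univ_nonempty (α := Fin m)
    rw [hLmax]
    exact le_trans (L i).2 (Finset.le_sup' (fun i => (L i : ℝ)) (Finset.mem_univ i))
  -- ‖y‖ ≤ Lmax ‖s‖
  have hynorm : ‖y‖ ≤ Lmax * ‖s‖ := by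
    rw [hy]
    calc ‖∑ i, lam i • (gradient (f i) x' - gradient (f i) x)‖
        ≤ ∑ i, ‖lam i • (gradient (f i) x' - gradient (f i) x)‖ :=
          norm_sum_le _ _
      _ ≤ ∑ i, lam i * (Lmax * ‖s‖) := by
          apply Finset.sum_le_sum
          intro i _
          rw [norm_smul, Real.norm_eq_abs, abs_of_nonneg (hlam0 i)]
          apply mul_le_mul_of_nonneg_left _ (hlam0 i)
          have hlip : ‖gradient (f i) x' - gradient (f i) x‖ ≤ (L i : ℝ) * ‖x' - x‖ := by
            have := (hL i).dist_le_mul x' x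
            simpa [dist_eq_norm] using this
          calc ‖gradient (f i) x' - gradient (f i) x‖ ≤ (L i : ℝ) * ‖x' - x‖ := hlip
            _ ≤ Lmax * ‖s‖ := by
                rw [hss]
                exact mul_le_mul_of_nonneg_right
                  (Finset.le_sup' (fun i => (L i : ℝ)) (Finset.mem_univ i))
                  (norm_nonneg _)
      _ = Lmax * ‖s‖ := by rw [← Finset.sum_mul, hlam1, one_mul]
  -- M ≤ Mmax
  have hM2 : M ≤ Mmax := by
    calc M ≤ ∑ i, lam i * Mmax := by
          apply Finset.sum_le_sum
          intro i _
          apply mul_le_mul_of_nonneg_left _ (hlam0 i)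
          have h1 := hbound i
          have h2 := hlow i
          have h3 : f i x₀ - flow ≤ Mmax := by
            rw [hMmax]; exact Finset.le_sup' (fun i => f i x₀ - flow) (Finset.mem_univ i)
          linarith
      _ = Mmax := by rw [← Finset.sum_mul, hlam1, one_mul]
  -- max(-t,0) ≤ Lmax
  have htb : max (-t) 0 ≤ Lmax := by
    have habs : |⟪y, s⟫| ≤ ‖y‖ * ‖s‖ := abs_real_inner_le_norm y s
    have h1 : -t ≤ Lmax := by
      rw [ht, ← neg_div, div_le_iff₀ hns2]
      have hh := mul_le_mul_of_nonneg_right hynorm (norm_nonneg s)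
      nlinarith [neg_abs_le (⟪y, s⟫ : ℝ)]
    exact max_le h1 hLmax0
  -- mh bounds
  have hmh0 : 0 ≤ mh := by
    rw [hmh]
    have h0 : (0:ℝ) ≤ max (-t) 0 := le_max_right _ _
    have hM0 : 0 ≤ M := le_trans (le_of_lt hc) hcM
    linarith
  have hmhb : mh ≤ Lmax + M := by rw [hmh]; linarith
  -- ‖γ‖ ≤ (2 Lmax + Mmax) ‖s‖
  set C : ℝ := 2 * Lmax + Mmax with hC
  have hMmax0 : 0 < Mmax := lt_of_lt_of_le (lt_of_lt_of_le hc hcM) hM2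
  have hC0 : 0 < C := by rw [hC]; linarith
  have hγnorm : ‖γ‖ ≤ C * ‖s‖ := by
    calc ‖γ‖ ≤ ‖y‖ + ‖mh • s‖ := by rw [hγ]; exact norm_add_le _ _
      _ = ‖y‖ + mh * ‖s‖ := by
          rw [norm_smul, Real.norm_eq_abs, abs_of_nonneg hmh0]
      _ ≤ Lmax * ‖s‖ + (Lmax + M) * ‖s‖ := by
          have := mul_le_mul_of_nonneg_right hmhb (norm_nonneg s)
          linarith
      _ ≤ C * ‖s‖ := by
          rw [hC]
          nlinarith [mul_le_mul_of_nonneg_right hM2 (norm_nonneg s), norm_nonneg s]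
  -- conclude part 2
  have hγs : σ₁ * α₀ * quad B d * ‖s‖ ^ 2 ≤ ⟪γ, s⟫ := by
    have h := (le_div_iff₀ hns2).mp part1
    linarith
  have hγspos : 0 < ⟪γ, s⟫ := lt_of_lt_of_le (by positivity) hγs
  calc ‖γ‖ ^ 2 / ⟪γ, s⟫ ≤ (C * ‖s‖) ^ 2 / (σ₁ * α₀ * quad B d * ‖s‖ ^ 2) := by
        apply div_le_div₀ (by positivity) _ (by positivity) hγs
        exact pow_le_pow_left₀ (norm_nonneg _) hγnorm 2
    _ = C ^ 2 / (σ₁ * α₀ * quad B d) := by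
        rw [mul_pow]
        rw [mul_comm (σ₁ * α₀ * quad B d) (‖s‖^2)]
        rw [mul_comm (C^2) (‖s‖^2)]
        rw [mul_div_mul_left _ _ (ne_of_gt hns2)]
end
end

section
/- (Zoutendijk condition) Suppose each f_i is continuously differentiable, bounded below, and ∇f_i is Lipschitz continuous with constant L_i. Let 0 < σ₁ < σ₂ < 1 and let (x_k), (d_k), (α_k) be sequences with d_k ≠ 0, D(x_k, d_k) < 0, x_{k+1} = x_k + α_k d_k, and α_k satisfying the Wolfe conditions at (x_k, d_k) for every k. Then Σ_{k≥0} D(x_k, d_k)² / ‖d_k‖² < ∞. -/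
open RealInnerProductSpace

noncomputable section

/-- Zoutendijk condition. -/
theorem stmt14 {n m : ℕ} [NeZero m] (f : Fin m → E n → ℝ)
    (hf : ∀ i, ContDiff ℝ 1 (f i))
    (hbdd : ∀ i, BddBelow (Set.range (f i)))
    (L : Fin m → NNReal) (hL : ∀ i, LipschitzWith (L i) (fun z => gradient (f i) z))
    (σ₁ σ₂ : ℝ) (h1 : 0 < σ₁) (h12 : σ₁ < σ₂) (h2 : σ₂ < 1)
    (x d : ℕ → E n) (α : ℕ → ℝ)
    (hd0 : ∀ k, d k ≠ 0) (hDneg : ∀ k, maxD f (x k) (d k) < 0)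
    (hα : ∀ k, 0 < α k)
    (hx : ∀ k, x (k + 1) = x k + α k • d k)
    (hw1 : ∀ k, ∀ i, f i (x k + α k • d k) ≤ f i (x k) + σ₁ * α k * maxD f (x k) (d k))
    (hw2 : ∀ k, σ₂ * maxD f (x k) (d k) ≤ maxD f (x k + α k • d k) (d k)) :
    Summable fun k => maxD f (x k) (d k) ^ 2 / ‖d k‖ ^ 2 := by
  classical
  set i₀ : Fin m := 0 with hi₀
  set Lm : ℝ := Finset.univ.sup' Finset.univ_nonempty (fun i => (L i : ℝ)) + 1 with hLm
  have hLmpos : 0 < Lm := by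
    have h0 : (0:ℝ) ≤ Finset.univ.sup' Finset.univ_nonempty (fun i => (L i : ℝ)) :=
      le_trans (L i₀).2 (Finset.le_sup' (fun i => ((L i : ℝ))) (Finset.mem_univ i₀))
    rw [hLm]; linarith
  set c : ℝ := σ₁ * (1 - σ₂) / Lm with hc
  have hcpos : 0 < c := div_pos (mul_pos h1 (by linarith)) hLmpos
  obtain ⟨B, hB⟩ := hbdd i₀
  have key : ∀ k, c * (maxD f (x k) (d k) ^ 2 / ‖d k‖ ^ 2) ≤ f i₀ (x k) - f i₀ (x (k+1)) := by
    intro k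
    have hdpos : (0:ℝ) < ‖d k‖ := norm_pos_iff.2 (hd0 k)
    have hDk := hDneg k
    obtain ⟨i, -, hi⟩ := Finset.exists_mem_eq_sup' (s := (Finset.univ : Finset (Fin m)))
      Finset.univ_nonempty (fun j => ⟪gradient (f j) (x k + α k • d k), d k⟫)
    have hcurv : σ₂ * maxD f (x k) (d k) ≤ ⟪gradient (f i) (x k + α k • d k), d k⟫ := by
      refine (hw2 k).trans (le_of_eq ?_)
      rw [maxD]
      exact hi
    have hLi : (L i : ℝ) ≤ Lm := by
      have := Finset.le_sup' (fun j => ((L j : ℝ))) (Finset.mem_univ i)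
      rw [hLm]; linarith
    have hlip : ‖gradient (f i) (x k + α k • d k) - gradient (f i) (x k)‖
        ≤ (L i : ℝ) * (α k * ‖d k‖) := by
      have h := (hL i).dist_le_mul (x k + α k • d k) (x k)
      simpa [dist_eq_norm, add_sub_cancel_left, norm_smul, abs_of_pos (hα k)] using h
    have hinner : ⟪gradient (f i) (x k + α k • d k) - gradient (f i) (x k), d k⟫
        ≤ Lm * (α k * ‖d k‖ * ‖d k‖) := by
      calc ⟪gradient (f i) (x k + α k • d k) - gradient (f i) (x k), d k⟫
          ≤ ‖gradient (f i) (x k + α k • d k) - gradient (f i) (x k)‖ * ‖d k‖ :=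
            real_inner_le_norm _ _
        _ ≤ ((L i : ℝ) * (α k * ‖d k‖)) * ‖d k‖ :=
            mul_le_mul_of_nonneg_right hlip hdpos.le
        _ ≤ Lm * (α k * ‖d k‖ * ‖d k‖) := by
            rw [mul_assoc]
            exact mul_le_mul_of_nonneg_right hLi
              (mul_nonneg (mul_nonneg (hα k).le hdpos.le) hdpos.le)
    have hle : ⟪gradient (f i) (x k), d k⟫ ≤ maxD f (x k) (d k) :=
      Finset.le_sup' (fun j => ⟪gradient (f j) (x k), d k⟫) (Finset.mem_univ i)
    have hsplit : ⟪gradient (f i) (x k + α k • d k), d k⟫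
        = ⟪gradient (f i) (x k), d k⟫
          + ⟪gradient (f i) (x k + α k • d k) - gradient (f i) (x k), d k⟫ := by
      rw [inner_sub_left]; ring
    have hα' : (1 - σ₂) * (-(maxD f (x k) (d k))) ≤ Lm * (α k * ‖d k‖ ^ 2) := by
      nlinarith [hcurv, hinner, hle, hsplit, sq_abs (‖d k‖)]
    have hw1' := hw1 k i₀
    have hstep : c * (maxD f (x k) (d k) ^ 2 / ‖d k‖ ^ 2)
        ≤ -(σ₁ * α k * maxD f (x k) (d k)) := by
      rw [hc, div_mul_eq_mul_div, div_le_iff₀ hLmpos, ← mul_div_assoc,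
        div_le_iff₀ (pow_pos hdpos 2)]
      have hmul := mul_le_mul_of_nonneg_left hα'
        (le_of_lt (mul_pos h1 (neg_pos.2 hDk)))
      nlinarith [hmul]
    rw [hx k]
    linarith
  have hg0 : ∀ k, (0:ℝ) ≤ maxD f (x k) (d k) ^ 2 / ‖d k‖ ^ 2 :=
    fun k => div_nonneg (sq_nonneg _) (sq_nonneg _)
  have hsum : Summable (fun k => c * (maxD f (x k) (d k) ^ 2 / ‖d k‖ ^ 2)) := by
    apply summable_of_sum_range_le (c := f i₀ (x 0) - B)
      (fun k => mul_nonneg hcpos.le (hg0 k))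
    intro N
    calc ∑ k ∈ Finset.range N, c * (maxD f (x k) (d k) ^ 2 / ‖d k‖ ^ 2)
        ≤ ∑ k ∈ Finset.range N, (f i₀ (x k) - f i₀ (x (k+1))) :=
          Finset.sum_le_sum fun k _ => key k
      _ = f i₀ (x 0) - f i₀ (x N) := Finset.sum_range_sub' (fun k => f i₀ (x k)) N
      _ ≤ f i₀ (x 0) - B := by
          have := hB ⟨x N, rfl⟩
          linarith
  have h2' := hsum.mul_left c⁻¹
  have heq : (fun k => c⁻¹ * (c * (maxD f (x k) (d k) ^ 2 / ‖d k‖ ^ 2)))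
      = fun k => maxD f (x k) (d k) ^ 2 / ‖d k‖ ^ 2 := by
    funext k; rw [← mul_assoc, inv_mul_cancel₀ hcpos.ne', one_mul]
  rwa [heq] at h2'
end
end

section
/- (Global convergence of MFQNMO) Suppose each f_i is continuously differentiable with ∇f_i Lipschitz continuous with constant L_i, and for every z ∈ ℝⁿ the level set {x : f_i(x) ≤ f_i(z) for all i} is bounded. Let 0 < σ₁ < σ₂ < 1, 0 < a ≤ b, and let (x_k), (d_k), (α_k), (B_k), (λ_k) satisfy for every k: B_k is symmetric with aI ⪯ B_k ⪯ bI; λ_k ∈ Δ_m minimizes λ ↦ ½ (Σ_i λ_i ∇f_i(x_k))ᵀ B_k^{-1} (Σ_i λ_i ∇f_i(x_k)) over Δ_m; d_k = −B_k^{-1} Σ_i λ_i^k ∇f_i(x_k) ≠ 0; x_{k+1} = x_k + α_k d_k with α_k satisfying the Wolfe conditions at (x_k, d_k); and B_{k+1} = B_k − (B_k s_k s_kᵀ B_k)/(s_kᵀ B_k s_k) + (γ_k γ_kᵀ)/(γ_kᵀ s_k), where s_k = x_{k+1} − x_k, y_k = Σ_i λ_i^k(∇f_i(x_{k+1}) −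 ∇f_i(x_k)), m_k = max(−y_kᵀs_k/‖s_k‖², 0) + Σ_i λ_i^k(f_i(x_k) − f_i(x_{k+1})), and γ_k = y_k + m_k s_k. Then: (i) liminf_{k→∞} ‖d_SD(x_k)‖ = 0, and (ii) every accumulation point of (x_k) is Pareto critical. -/
open RealInnerProductSpace

noncomputable section

def outer {n : ℕ} (u v : E n) : Matrix (Fin n) (Fin n) ℝ :=
  Matrix.of fun i j => u i * v j

def bfgsUpdate {n : ℕ} (B : Matrix (Fin n) (Fin n) ℝ) (s γ : E n) :
    Matrix (Fin n) (Fin n) ℝ :=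
  B - (quad B s)⁻¹ • (B * outer s s * B) + (⟪γ, s⟫)⁻¹ • outer γ γ

def yVec {n m : ℕ} (f : Fin m → E n → ℝ) (lam : Fin m → ℝ) (x x' : E n) : E n :=
  ∑ i, lam i • (gradient (f i) x' - gradient (f i) x)

def mScalar {n m : ℕ} (f : Fin m → E n → ℝ) (lam : Fin m → ℝ) (x x' : E n) : ℝ :=
  max (-(⟪yVec f lam x x', x' - x⟫ / ‖x' - x‖ ^ 2)) 0 + ∑ i, lam i * (f i x - f i x')

def gammaVec {n m : ℕ} (f : Fin m → E n → ℝ) (lam : Fin m → ℝ) (x x' : E n) : E n :=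
  yVec f lam x x' + mScalar f lam x x' • (x' - x)

namespace Stmt16Aux

variable {n m : ℕ}

lemma inner_eq (u v : E n) : ⟪u, v⟫ = ∑ i, u i * v i := by
  simp [PiLp.inner_apply, RCLike.inner_apply, mul_comm]

lemma mulVecE_apply (B : Matrix (Fin n) (Fin n) ℝ) (v : E n) (i : Fin n) :
    mulVecE B v i = ∑ j, B i j * v j := rfl

lemma mulVecE_add (B : Matrix (Fin n) (Fin n) ℝ) (u v : E n) :
    mulVecE B (u + v) = mulVecE B u + mulVecE B v := map_add (Matrix.toEuclideanLin B) u v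

lemma mulVecE_smul (B : Matrix (Fin n) (Fin n) ℝ) (c : ℝ) (v : E n) :
    mulVecE B (c • v) = c • mulVecE B v := map_smul (Matrix.toEuclideanLin B) c v

lemma mulVecE_neg (B : Matrix (Fin n) (Fin n) ℝ) (v : E n) :
    mulVecE B (-v) = -(mulVecE B v) := map_neg (Matrix.toEuclideanLin B) v

lemma mulVecE_sub (B : Matrix (Fin n) (Fin n) ℝ) (u v : E n) :
    mulVecE B (u - v) = mulVecE B u - mulVecE B v := map_sub (Matrix.toEuclideanLin B) u v

lemma mulVecE_one (v : E n) : mulVecE (1 : Matrix (Fin n) (Fin n) ℝ) v = v := by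
  ext i
  simp [mulVecE_apply, Matrix.one_apply]

lemma mulVecE_mulVecE (A C : Matrix (Fin n) (Fin n) ℝ) (v : E n) :
    mulVecE A (mulVecE C v) = mulVecE (A * C) v := by
  ext i
  simp only [mulVecE_apply, Matrix.mul_apply, Finset.sum_mul, Finset.mul_sum]
  rw [Finset.sum_comm]
  congr 1; ext j; congr 1; ext l; ring

lemma psd_inner {A : Matrix (Fin n) (Fin n) ℝ} (hA : A.PosSemidef) (v : E n) :
    0 ≤ ⟪v, mulVecE A v⟫ := by
  have := hA.dotProduct_mulVec_nonneg (fun i => v i)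
  simpa [inner_eq, mulVecE_apply, dotProduct, Matrix.mulVec] using this

lemma quad_eq (A : Matrix (Fin n) (Fin n) ℝ) (u : E n) :
    quad A u = ⟪u, mulVecE A u⟫ := by
  simp [quad, inner_eq, mulVecE_apply, Finset.mul_sum, mul_assoc]

lemma inner_mulVecE_symm {A : Matrix (Fin n) (Fin n) ℝ} (hA : A.IsSymm) (u v : E n) :
    ⟪u, mulVecE A v⟫ = ⟪mulVecE A u, v⟫ := by
  simp only [inner_eq, mulVecE_apply, Finset.mul_sum, Finset.sum_mul]
  rw [Finset.sum_comm]
  congr 1; ext i; congr 1; ext j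
  rw [hA.apply i j]
  ring

lemma lower_bound {A : Matrix (Fin n) (Fin n) ℝ} {a : ℝ}
    (h : (A - a • (1 : Matrix (Fin n) (Fin n) ℝ)).PosSemidef) (v : E n) :
    a * ‖v‖ ^ 2 ≤ ⟪v, mulVecE A v⟫ := by
  have h0 : (0:ℝ) ≤ ⟪v, mulVecE (A - a • 1) v⟫ := psd_inner h v
  have heq : mulVecE (A - a • (1 : Matrix (Fin n) (Fin n) ℝ)) v = mulVecE A v - a • v := by
    ext i
    simp [mulVecE_apply, Matrix.sub_apply, Matrix.smul_apply, Matrix.one_apply, sub_mul,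
      Finset.sum_sub_distrib, Finset.mul_sum, ite_mul]
  rw [heq, inner_sub_right, real_inner_smul_right, real_inner_self_eq_norm_sq] at h0
  linarith

lemma upper_bound {A : Matrix (Fin n) (Fin n) ℝ} {b : ℝ}
    (h : ((b • (1 : Matrix (Fin n) (Fin n) ℝ)) - A).PosSemidef) (v : E n) :
    ⟪v, mulVecE A v⟫ ≤ b * ‖v‖ ^ 2 := by
  have h0 : (0:ℝ) ≤ ⟪v, mulVecE ((b • 1) - A) v⟫ := psd_inner h v
  have heq : mulVecE ((b • (1 : Matrix (Fin n) (Fin n) ℝ)) - A) v = b • v - mulVecE A v := by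
    ext i
    simp [mulVecE_apply, Matrix.sub_apply, Matrix.smul_apply, Matrix.one_apply, sub_mul,
      Finset.sum_sub_distrib, Finset.mul_sum, ite_mul]
  rw [heq, inner_sub_right, real_inner_smul_right, real_inner_self_eq_norm_sq] at h0
  linarith

lemma bform_le {A : Matrix (Fin n) (Fin n) ℝ} {b : ℝ} (hb : 0 < b)
    (hA : A.PosSemidef) (hup : ((b • (1 : Matrix (Fin n) (Fin n) ℝ)) - A).PosSemidef)
    (hs : A.IsSymm) (u v : E n) :
    ⟪u, mulVecE A v⟫ ≤ b * ‖u‖ * ‖v‖ := by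
  rcases eq_or_ne u 0 with rfl | hu
  · simp [hb.le]
  rcases eq_or_ne v 0 with rfl | hv
  · have hz : mulVecE A (0:E n) = 0 := map_zero (Matrix.toEuclideanLin A)
    simp [hz]
  have hun : 0 < ‖u‖ := norm_pos_iff.mpr hu
  have hvn : 0 < ‖v‖ := norm_pos_iff.mpr hv
  set w : E n := ‖v‖ • u - ‖u‖ • v with hw
  have h0 : 0 ≤ ⟪w, mulVecE A w⟫ := psd_inner hA w
  have hsym : ⟪u, mulVecE A v⟫ = ⟪v, mulVecE A u⟫ := by
    rw [inner_mulVecE_symm hs, real_inner_comm]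
  have hexp : ⟪w, mulVecE A w⟫ =
      ‖v‖^2 * ⟪u, mulVecE A u⟫ - 2*‖u‖*‖v‖*⟪u, mulVecE A v⟫ + ‖u‖^2 * ⟪v, mulVecE A v⟫ := by
    rw [hw, mulVecE_sub, mulVecE_smul, mulVecE_smul]
    simp only [inner_sub_left, inner_sub_right, real_inner_smul_left, real_inner_smul_right]
    rw [hsym]; ring
  have hu2 : ⟪u, mulVecE A u⟫ ≤ b * ‖u‖^2 := upper_bound hup u
  have hv2 : ⟪v, mulVecE A v⟫ ≤ b * ‖v‖^2 := upper_bound hup v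
  nlinarith [mul_pos hun hvn]

lemma mulVecE_norm_le {A : Matrix (Fin n) (Fin n) ℝ} {b : ℝ} (hb : 0 < b)
    (hA : A.PosSemidef) (hup : ((b • (1 : Matrix (Fin n) (Fin n) ℝ)) - A).PosSemidef)
    (hs : A.IsSymm) (v : E n) :
    ‖mulVecE A v‖ ≤ b * ‖v‖ := by
  set u := mulVecE A v
  have h := bform_le hb hA hup hs u v
  have h2 : ‖u‖^2 = ⟪u, mulVecE A v⟫ := (real_inner_self_eq_norm_sq u).symm
  rcases eq_or_lt_of_le (norm_nonneg u) with h0 | h0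
  · rw [← h0]; positivity
  · nlinarith

lemma posdef_of_lower {a : ℝ} (ha : 0 < a) {M : Matrix (Fin n) (Fin n) ℝ}
    (h : (M - a • (1 : Matrix (Fin n) (Fin n) ℝ)).PosSemidef) : M.PosDef := by
  have h1 : (a • (1 : Matrix (Fin n) (Fin n) ℝ)).PosDef := by
    rw [Matrix.smul_one_eq_diagonal]
    exact Matrix.posDef_diagonal_iff.mpr fun _ => ha
  have := Matrix.PosDef.posSemidef_add h h1
  simpa using this

lemma small_t {c q : ℝ} (hq : 0 ≤ q)
    (h : ∀ t : ℝ, 0 < t → t ≤ 1 → 0 ≤ 2*t*c + t^2*q) : 0 ≤ c := by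
  by_contra hc
  push_neg at hc
  have hcpos : 0 < -c := by linarith
  set t := min 1 (-c/(q+1)) with ht
  have htpos : 0 < t := lt_min one_pos (by positivity)
  have ht1 : t ≤ 1 := min_le_left _ _
  have htq : t * q ≤ -c := by
    have h2 : t ≤ -c/(q+1) := min_le_right _ _
    have h3 : t * q ≤ (-c/(q+1)) * q := by nlinarith
    calc t * q ≤ (-c/(q+1)) * q := h3
      _ ≤ -c := by
        rw [div_mul_eq_mul_div, div_le_iff₀ (by linarith)]
        nlinarith
  have := h t htpos ht1
  nlinarith

lemma mix_mem {lam : Fin m → ℝ} (hl : lam ∈ stdSimplex ℝ (Fin m)) (i : Fin m)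
    {t : ℝ} (ht0 : 0 ≤ t) (ht1 : t ≤ 1) :
    (fun j => (1-t) * lam j + t * (if j = i then 1 else 0)) ∈ stdSimplex ℝ (Fin m) := by
  constructor
  · intro j
    have h1 := hl.1 j
    simp only []
    have : (0:ℝ) ≤ t * (if j = i then 1 else 0) := by positivity
    nlinarith
  · simp only []
    rw [Finset.sum_add_distrib, ← Finset.mul_sum, ← Finset.mul_sum, hl.2]
    simp

lemma mix_sum (lam : Fin m → ℝ) (i : Fin m) (t : ℝ) (v : Fin m → E n) :
    ∑ j, ((1-t) * lam j + t * (if j = i then 1 else 0)) • v j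
      = (∑ j, lam j • v j) + t • (v i - ∑ j, lam j • v j) := by
  simp only [add_smul, Finset.sum_add_distrib, mul_smul]
  rw [← Finset.smul_sum, ← Finset.smul_sum]
  have : ∑ j, ((if j = i then (1:ℝ) else 0) • v j) = v i := by
    simp [ite_smul]
  rw [this, sub_smul, one_smul, smul_sub]
  abel

lemma combo_le_sup [NeZero m] {lam : Fin m → ℝ} (hl : lam ∈ stdSimplex ℝ (Fin m))
    (c : Fin m → ℝ) :
    ∑ j, lam j * c j ≤ Finset.univ.sup' Finset.univ_nonempty c := by
  set M := Finset.univ.sup' Finset.univ_nonempty c with hM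
  calc ∑ j, lam j * c j ≤ ∑ j, lam j * M := by
        apply Finset.sum_le_sum
        intro j _
        exact mul_le_mul_of_nonneg_left (Finset.le_sup' c (Finset.mem_univ j)) (hl.1 j)
    _ = M := by rw [← Finset.sum_mul, hl.2, one_mul]

lemma opt_ineq {A : Matrix (Fin n) (Fin n) ℝ} (hApsd : A.PosSemidef) (hAs : A.IsSymm)
    {lam : Fin m → ℝ} (hl : lam ∈ stdSimplex ℝ (Fin m)) (v : Fin m → E n)
    (hmin : ∀ μ ∈ stdSimplex ℝ (Fin m),
      quad A (∑ j, lam j • v j)/2 ≤ quad A (∑ j, μ j • v j)/2)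
    (i : Fin m) :
    ⟪∑ j, lam j • v j, mulVecE A (∑ j, lam j • v j)⟫
      ≤ ⟪v i, mulVecE A (∑ j, lam j • v j)⟫ := by
  set G : E n := ∑ j, lam j • v j with hG
  set w : E n := v i - G with hw
  have key : 0 ≤ ⟪w, mulVecE A G⟫ := by
    apply small_t (psd_inner hApsd w)
    intro t ht0 ht1
    have h := hmin _ (mix_mem hl i ht0.le ht1)
    rw [mix_sum lam i t v] at h
    rw [← hG, ← hw] at h
    rw [quad_eq, quad_eq] at h
    have hexp : ⟪G + t • w, mulVecE A (G + t • w)⟫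
        = ⟪G, mulVecE A G⟫ + 2*t*⟪w, mulVecE A G⟫ + t^2*⟪w, mulVecE A w⟫ := by
      rw [mulVecE_add, mulVecE_smul]
      simp only [inner_add_left, inner_add_right, real_inner_smul_left,
        real_inner_smul_right]
      have hsym2 : ⟪G, mulVecE A w⟫ = ⟪w, mulVecE A G⟫ := by
        rw [inner_mulVecE_symm hAs, real_inner_comm]
      rw [hsym2]; ring
    rw [hexp] at h
    linarith
  rw [hw, inner_sub_left] at key
  linarith

lemma sq_half_le {s G : ℝ} (hs : 0 ≤ s) (hG : 0 ≤ G) (h : s^2/2 ≤ G*s) : s ≤ 2*G := by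
  rcases eq_or_lt_of_le hs with h0 | h0
  · rw [← h0]; positivity
  · nlinarith

lemma half_bound {eps c G : ℝ} (hc : 0 ≤ c) (hG : 0 ≤ G) (heps : 0 < eps)
    (h : G < eps/(2*(c+1))) : G * c ≤ eps/2 := by
  have h1 : (0:ℝ) < c + 1 := by linarith
  have h2 : G * (c+1) ≤ (eps/(2*(c+1))) * (c+1) := mul_le_mul_of_nonneg_right h.le h1.le
  have h3 : (eps/(2*(c+1))) * (c+1) = eps/2 := by field_simp
  nlinarith

lemma delta_bound {eps c Lm t : ℝ} (hc : 0 ≤ c) (hLm : 0 < Lm) (heps : 0 < eps)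
    (ht : 0 ≤ t) (h : t < eps/(2*Lm*(c+1))) : Lm * t * c ≤ eps/2 := by
  have h1 : (0:ℝ) < c + 1 := by linarith
  have h3 : Lm * t * c ≤ Lm * t * (c+1) := by nlinarith
  have h4 : Lm * t * (c+1) ≤ Lm * (eps/(2*Lm*(c+1))) * (c+1) :=
    mul_le_mul_of_nonneg_right (mul_le_mul_of_nonneg_left h.le hLm.le) h1.le
  have h5 : Lm * (eps/(2*Lm*(c+1))) * (c+1) = eps/2 := by
    field_simp
  linarith

lemma maxD_def [NeZero m] (f : Fin m → E n → ℝ) (x d : E n) :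
    maxD f x d = Finset.univ.sup' Finset.univ_nonempty
      (fun i => ⟪gradient (f i) x, d⟫) := rfl

end Stmt16Aux

open Stmt16Aux Filter

set_option maxHeartbeats 2000000 in
/-- Global convergence of MFQNMO. -/
theorem stmt16 {n m : ℕ} [NeZero m] (f : Fin m → E n → ℝ)
    (hf : ∀ i, ContDiff ℝ 1 (f i))
    (L : Fin m → NNReal) (hL : ∀ i, LipschitzWith (L i) (fun z => gradient (f i) z))
    (hlevel : ∀ z : E n, Bornology.IsBounded {w : E n | ∀ i, f i w ≤ f i z})
    (σ₁ σ₂ : ℝ) (h1 : 0 < σ₁) (h12 : σ₁ < σ₂) (h2 : σ₂ < 1)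
    (a b : ℝ) (ha : 0 < a) (hab : a ≤ b)
    (x d : ℕ → E n) (α : ℕ → ℝ) (B : ℕ → Matrix (Fin n) (Fin n) ℝ)
    (lam : ℕ → Fin m → ℝ)
    (hsymm : ∀ k, (B k).IsSymm)
    (hBlow : ∀ k, (B k - a • (1 : Matrix (Fin n) (Fin n) ℝ)).PosSemidef)
    (hBup : ∀ k, ((b • (1 : Matrix (Fin n) (Fin n) ℝ)) - B k).PosSemidef)
    (hlam : ∀ k, lam k ∈ stdSimplex ℝ (Fin m))
    (hlammin : ∀ k, ∀ μ ∈ stdSimplex ℝ (Fin m),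
      quad (B k)⁻¹ (∑ i, lam k i • gradient (f i) (x k)) / 2 ≤
        quad (B k)⁻¹ (∑ i, μ i • gradient (f i) (x k)) / 2)
    (hd : ∀ k, d k = -(mulVecE (B k)⁻¹ (∑ i, lam k i • gradient (f i) (x k))))
    (hd0 : ∀ k, d k ≠ 0)
    (hα : ∀ k, 0 < α k) (hx : ∀ k, x (k + 1) = x k + α k • d k)
    (hw1 : ∀ k, ∀ i, f i (x k + α k • d k) ≤ f i (x k) + σ₁ * α k * maxD f (x k) (d k))
    (hw2 : ∀ k, σ₂ * maxD f (x k) (d k) ≤ maxD f (x k + α k • d k) (d k))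
    (hBrec : ∀ k, B (k + 1) =
      bfgsUpdate (B k) (x (k + 1) - x k) (gammaVec f (lam k) (x k) (x (k + 1))))
    (dSD : E n → E n)
    (hdSD : ∀ z, ∀ dd : E n,
      maxD f z (dSD z) + ‖dSD z‖ ^ 2 / 2 ≤ maxD f z dd + ‖dd‖ ^ 2 / 2) :
    Filter.liminf (fun k => ‖dSD (x k)‖) Filter.atTop = 0 ∧
    ∀ xs : E n, MapClusterPt xs Filter.atTop x → ParetoCritical f xs := by
  classical
  have hb : 0 < b := lt_of_lt_of_le ha hab
  set g : ℕ → E n := fun k => ∑ i, lam k i • gradient (f i) (x k) with hgdef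
  have hgk : ∀ k, (∑ i, lam k i • gradient (f i) (x k)) = g k := fun k => rfl
  set D : ℕ → ℝ := fun k => maxD f (x k) (d k) with hDdef
  have hDk : ∀ k, maxD f (x k) (d k) = D k := fun k => rfl
  -- basic matrix facts
  have hBpd : ∀ k, (B k).PosDef := fun k => posdef_of_lower ha (hBlow k)
  have hBpsd : ∀ k, (B k).PosSemidef := fun k => (hBpd k).posSemidef
  have hBinv_symm : ∀ k, ((B k)⁻¹).IsSymm := by
    intro k
    unfold Matrix.IsSymm
    rw [Matrix.transpose_nonsing_inv, (hsymm k)]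
  have hBinv_psd : ∀ k, ((B k)⁻¹).PosSemidef := fun k => (hBpd k).inv.posSemidef
  have hBBinv : ∀ k (v : E n), mulVecE (B k) (mulVecE (B k)⁻¹ v) = v := by
    intro k v
    rw [mulVecE_mulVecE, Matrix.mul_nonsing_inv _ (hBpd k).det_pos.ne'.isUnit, mulVecE_one]
  have hAg : ∀ k, mulVecE (B k)⁻¹ (g k) = -(d k) := by
    intro k
    rw [hd k, neg_neg, hgk]
  have hgd : ∀ k, mulVecE (B k) (d k) = -(g k) := by
    intro k
    conv_lhs => rw [hd k]
    rw [mulVecE_neg, hBBinv, hgk]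
  -- optimality of lam
  have hopt : ∀ k (i : Fin m), ⟪gradient (f i) (x k), d k⟫ ≤ -⟪d k, mulVecE (B k) (d k)⟫ := by
    intro k i
    have h := opt_ineq (hBinv_psd k) (hBinv_symm k) (hlam k)
      (fun j => gradient (f j) (x k)) (fun μ hμ => hlammin k μ hμ) i
    rw [hgk k, hAg k] at h
    rw [inner_neg_right, inner_neg_right] at h
    have h4 : ⟪g k, d k⟫ = -⟪d k, mulVecE (B k) (d k)⟫ := by
      rw [hgd k, inner_neg_right, neg_neg, real_inner_comm]
    linarith [h, h4]
  -- maxD bound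
  have hDle : ∀ k, D k ≤ -(a * ‖d k‖^2) := by
    intro k
    rw [← hDk k, maxD_def]
    apply Finset.sup'_le
    intro i _
    show ⟪gradient (f i) (x k), d k⟫ ≤ -(a * ‖d k‖^2)
    have h := hopt k i
    have hlow := lower_bound (hBlow k) (d k)
    linarith
  have hdnorm : ∀ k, 0 < ‖d k‖ := fun k => norm_pos_iff.mpr (hd0 k)
  have hDneg : ∀ k, D k < 0 := by
    intro k
    have h := hDle k
    have := mul_pos ha (pow_pos (hdnorm k) 2)
    linarith
  -- decrease of f
  have hstep : ∀ k (i : Fin m), f i (x (k+1)) ≤ f i (x k) + σ₁ * α k * D k := by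
    intro k i
    rw [hx k]
    have := hw1 k i
    rw [hDk k] at this
    exact this
  have hdec : ∀ k (i : Fin m), f i (x (k+1)) ≤ f i (x k) := by
    intro k i
    have h := hstep k i
    have hneg : σ₁ * α k * D k < 0 := mul_neg_of_pos_of_neg (mul_pos h1 (hα k)) (hDneg k)
    linarith
  have hlev : ∀ k (i : Fin m), f i (x k) ≤ f i (x 0) := by
    intro k
    induction k with
    | zero => exact fun i => le_refl _
    | succ k ih => exact fun i => le_trans (hdec k i) (ih i)
  -- lower bound on f along sequence
  obtain ⟨R, hR⟩ := (hlevel (x 0)).subset_closedBall 0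
  have hxk : ∀ k, x k ∈ Metric.closedBall 0 R := fun k => hR (fun i => hlev k i)
  have hi0 : Nonempty (Fin m) := ⟨⟨0, Nat.pos_of_ne_zero (NeZero.ne m)⟩⟩
  set i0 : Fin m := Classical.arbitrary (Fin m) with hi0def
  obtain ⟨z, hz, hzmin'⟩ := (isCompact_closedBall (0:E n) R).exists_isMinOn
    ⟨x 0, hxk 0⟩ ((hf i0).continuous.continuousOn)
  have hzmin : ∀ w ∈ Metric.closedBall (0:E n) R, f i0 z ≤ f i0 w :=
    fun w hw => hzmin' hw
  -- summability
  have hterm_nonneg : ∀ k, 0 ≤ α k * (-(D k)) := by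
    intro k
    exact mul_nonneg (hα k).le (by linarith [hDneg k])
  have hsum : Summable (fun k => α k * (-(D k))) := by
    apply summable_of_sum_range_le (c := (f i0 (x 0) - f i0 z)/σ₁) hterm_nonneg
    intro K
    have htel : ∑ j ∈ Finset.range K, (f i0 (x j) - f i0 (x (j+1)))
        = f i0 (x 0) - f i0 (x K) := Finset.sum_range_sub' (fun j => f i0 (x j)) K
    have hge : σ₁ * ∑ j ∈ Finset.range K, (α j * -(D j)) ≤ f i0 (x 0) - f i0 (x K) := by
      rw [Finset.mul_sum, ← htel]
      apply Finset.sum_le_sum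
      intro j _
      have := hstep j i0
      nlinarith
    have hlb : f i0 z ≤ f i0 (x K) := hzmin _ (hxk K)
    rw [le_div_iff₀ h1]
    nlinarith
  -- Lipschitz constant
  set Lm : ℝ := (Finset.univ.sup' Finset.univ_nonempty (fun i : Fin m => (L i : ℝ))) + 1
    with hLmdef
  have hLmle : ∀ i, (L i : ℝ) ≤ Lm := by
    intro i
    have := Finset.le_sup' (fun i : Fin m => (L i : ℝ)) (Finset.mem_univ i)
    rw [hLmdef]
    linarith
  have hLmpos : 0 < Lm := by
    have h := Finset.le_sup' (fun i : Fin m => (L i : ℝ)) (Finset.mem_univ i0)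
    have h2 := (L i0).coe_nonneg
    rw [hLmdef]
    linarith
  have hLip : ∀ (i : Fin m) (w w' : E n),
      ‖gradient (f i) w - gradient (f i) w'‖ ≤ Lm * ‖w - w'‖ := by
    intro i w w'
    have h := (hL i).dist_le_mul w w'
    rw [dist_eq_norm, dist_eq_norm] at h
    calc ‖gradient (f i) w - gradient (f i) w'‖ ≤ (L i : ℝ) * ‖w - w'‖ := h
      _ ≤ Lm * ‖w - w'‖ := mul_le_mul_of_nonneg_right (hLmle i) (norm_nonneg _)
  -- key per-step bound
  have hkey : ∀ k, ((1-σ₂) * a^2 / Lm) * ‖d k‖^2 ≤ α k * (-(D k)) := by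
    intro k
    obtain ⟨i', -, hi'⟩ := Finset.exists_mem_eq_sup' (Finset.univ_nonempty)
      (fun i : Fin m => ⟪gradient (f i) (x k + α k • d k), d k⟫)
    have h2 : σ₂ * D k ≤ ⟪gradient (f i') (x k + α k • d k), d k⟫ := by
      have hh := hw2 k
      rw [hDk k, maxD_def, hi'] at hh
      exact hh
    have h3 : ⟪gradient (f i') (x k), d k⟫ ≤ D k := by
      rw [← hDk k, maxD_def]
      exact Finset.le_sup' (fun i : Fin m => ⟪gradient (f i) (x k), d k⟫) (Finset.mem_univ i')
    have h4 : ⟪gradient (f i') (x k + α k • d k) - gradient (f i') (x k), d k⟫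
        ≤ Lm * (α k * ‖d k‖) * ‖d k‖ := by
      have hcs := real_inner_le_norm
        (gradient (f i') (x k + α k • d k) - gradient (f i') (x k)) (d k)
      have hlip := hLip i' (x k + α k • d k) (x k)
      have hnm : ‖(x k + α k • d k) - x k‖ = α k * ‖d k‖ := by
        simp [norm_smul, abs_of_pos (hα k)]
      rw [hnm] at hlip
      nlinarith [norm_nonneg (d k), norm_nonneg
        (gradient (f i') (x k + α k • d k) - gradient (f i') (x k))]
    have hin : ⟪gradient (f i') (x k + α k • d k) - gradient (f i') (x k), d k⟫
        = ⟪gradient (f i') (x k + α k • d k), d k⟫ - ⟪gradient (f i') (x k), d k⟫ :=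
      inner_sub_left _ _ _
    have h5 : (1-σ₂) * (-(D k)) ≤ Lm * α k * ‖d k‖^2 := by
      rw [hin] at h4
      nlinarith
    have hDlow : a * ‖d k‖^2 ≤ -(D k) := by linarith [hDle k]
    have h1σ : (0:ℝ) ≤ 1 - σ₂ := by linarith
    have p1 : ((1-σ₂)*(a*‖d k‖^2))*(a*‖d k‖^2) ≤ ((1-σ₂)*(-(D k)))*(a*‖d k‖^2) :=
      mul_le_mul_of_nonneg_right (mul_le_mul_of_nonneg_left hDlow h1σ)
        (mul_nonneg ha.le (sq_nonneg _))
    have p2 : ((1-σ₂)*(-(D k)))*(a*‖d k‖^2) ≤ (Lm*α k*‖d k‖^2)*(a*‖d k‖^2) :=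
      mul_le_mul_of_nonneg_right h5 (mul_nonneg ha.le (sq_nonneg _))
    have p3 : (Lm*α k*‖d k‖^2)*(a*‖d k‖^2) ≤ (Lm*α k*‖d k‖^2)*(-(D k)) :=
      mul_le_mul_of_nonneg_left hDlow
        (mul_nonneg (mul_nonneg hLmpos.le (hα k).le) (sq_nonneg _))
    rw [div_mul_eq_mul_div, div_le_iff₀ hLmpos]
    nlinarith [pow_pos (hdnorm k) 2]
  -- summability of ‖d k‖²
  have hsum2 : Summable (fun k => ‖d k‖^2) := by
    set c1 : ℝ := (1-σ₂)*a^2/Lm with hc1def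
    have hc1 : 0 < c1 := by
      exact div_pos (mul_pos (by linarith) (pow_pos ha 2)) hLmpos
    have hs1 : Summable (fun k => c1 * ‖d k‖^2) :=
      Summable.of_nonneg_of_le (fun k => by positivity) (fun k => hkey k) hsum
    have hs2 := hs1.mul_left c1⁻¹
    exact hs2.congr (fun k => by rw [inv_mul_cancel_left₀ hc1.ne'])
  have hd2lim : Tendsto (fun k => ‖d k‖^2) atTop (nhds 0) := hsum2.tendsto_atTop_zero
  have hdlim : Tendsto (fun k => ‖d k‖) atTop (nhds 0) := by
    have hcont : Tendsto (Real.sqrt ∘ fun k => ‖d k‖^2) atTop (nhds (Real.sqrt 0)) :=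
      (Real.continuous_sqrt.tendsto 0).comp hd2lim
    have heq : (Real.sqrt ∘ fun k => ‖d k‖^2) = fun k => ‖d k‖ :=
      funext fun k => Real.sqrt_sq (norm_nonneg _)
    rw [heq, Real.sqrt_zero] at hcont
    exact hcont
  -- g k bound and limit
  have hgle : ∀ k, ‖g k‖ ≤ b * ‖d k‖ := by
    intro k
    have hgeq : g k = -(mulVecE (B k) (d k)) := by rw [hgd k, neg_neg]
    rw [hgeq, norm_neg]
    exact mulVecE_norm_le hb (hBpsd k) (hBup k) (hsymm k) (d k)
  have hglim : Tendsto (fun k => ‖g k‖) atTop (nhds 0) := by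
    apply squeeze_zero (fun k => norm_nonneg _) hgle
    have := hdlim.const_mul b
    simpa using this
  -- convex combination bound
  have hcombo : ∀ k (w : E n), ⟪g k, w⟫ ≤ maxD f (x k) w := by
    intro k w
    have hexp : ⟪g k, w⟫ = ∑ j, lam k j * ⟪gradient (f j) (x k), w⟫ := by
      rw [← hgk k, sum_inner]
      simp [real_inner_smul_left, Finset.mul_sum, mul_assoc]
    rw [hexp, maxD_def]
    exact combo_le_sup (hlam k) _
  -- part (i)
  have hdSDle : ∀ k, ‖dSD (x k)‖ ≤ 2 * ‖g k‖ := by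
    intro k
    have h := hdSD (x k) 0
    have h0 : maxD f (x k) (0:E n) = 0 := by
      rw [maxD_def]
      simp
    rw [h0] at h
    simp only [norm_zero] at h
    have hlow := hcombo k (dSD (x k))
    have hcs : -(‖g k‖ * ‖dSD (x k)‖) ≤ ⟪g k, dSD (x k)⟫ := by
      have habs := abs_real_inner_le_norm (g k) (dSD (x k))
      have := (abs_le.mp habs).1
      linarith
    have hq : ‖dSD (x k)‖^2/2 ≤ ‖g k‖ * ‖dSD (x k)‖ := by linarith
    exact sq_half_le (norm_nonneg _) (norm_nonneg _) hq
  have hdSDlim : Tendsto (fun k => ‖dSD (x k)‖) atTop (nhds 0) := by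
    apply squeeze_zero (fun k => norm_nonneg _) hdSDle
    have := hglim.const_mul (2:ℝ)
    simpa using this
  refine ⟨hdSDlim.liminf_eq, ?_⟩
  -- part (ii)
  intro xs hcl dd
  have hmaxle : ∀ (w w' : E n), maxD f w dd ≤ maxD f w' dd + Lm * ‖w - w'‖ * ‖dd‖ := by
    intro w w'
    rw [maxD_def]
    apply Finset.sup'_le
    intro i _
    have h4 : ⟪gradient (f i) w', dd⟫ ≤ maxD f w' dd := by
      rw [maxD_def]
      exact Finset.le_sup' (fun j : Fin m => ⟪gradient (f j) w', dd⟫) (Finset.mem_univ i)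
    have h2 := real_inner_le_norm (gradient (f i) w - gradient (f i) w') dd
    have h3 := mul_le_mul_of_nonneg_right (hLip i w w') (norm_nonneg dd)
    have h5 : ⟪gradient (f i) w - gradient (f i) w', dd⟫
        = ⟪gradient (f i) w, dd⟫ - ⟪gradient (f i) w', dd⟫ := inner_sub_left _ _ _
    show ⟪gradient (f i) w, dd⟫ ≤ maxD f w' dd + Lm * ‖w - w'‖ * ‖dd‖
    linarith
  have hge : ∀ ε : ℝ, 0 < ε → -ε ≤ maxD f xs dd := by
    intro ε hε
    have hev : ∀ᶠ k in atTop, ‖g k‖ * ‖dd‖ ≤ ε/2 := by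
      have hlt : ∀ᶠ k in atTop, ‖g k‖ < ε/(2*(‖dd‖+1)) :=
        hglim.eventually_lt_const (by positivity)
      filter_upwards [hlt] with k hk
      exact half_bound (norm_nonneg dd) (norm_nonneg _) hε hk
    have hδden : (0:ℝ) < 2*Lm*(‖dd‖+1) :=
      mul_pos (mul_pos two_pos hLmpos) (by positivity)
    set δ : ℝ := ε/(2*Lm*(‖dd‖+1)) with hδdef
    have hδpos : 0 < δ := div_pos hε hδden
    have hfreq : ∃ᶠ k in atTop, x k ∈ Metric.ball xs δ :=
      (mapClusterPt_iff_frequently.mp hcl) _ (Metric.ball_mem_nhds xs hδpos)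
    obtain ⟨k, hk1, hk2⟩ := (hfreq.and_eventually hev).exists
    have c1 : -(ε/2) ≤ ⟪g k, dd⟫ := by
      have habs := abs_real_inner_le_norm (g k) dd
      have := (abs_le.mp habs).1
      linarith
    have c2 := hcombo k dd
    have c3 := hmaxle (x k) xs
    have hdist : ‖x k - xs‖ < δ := by
      rw [Metric.mem_ball, dist_eq_norm] at hk1
      exact hk1
    have c4 : Lm * ‖x k - xs‖ * ‖dd‖ ≤ ε/2 := by
      rw [hδdef] at hdist
      exact delta_bound (norm_nonneg dd) hLmpos hε (norm_nonneg _) hdist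
    have k1 : -(ε/2) ≤ maxD f (x k) dd := le_trans c1 c2
    have k2 : maxD f (x k) dd ≤ maxD f xs dd + ε/2 := le_trans c3 (by linarith [c4])
    linarith [k1, k2]
  have h0le : 0 ≤ maxD f xs dd := by
    by_contra hcon
    push_neg at hcon
    have := hge (-(maxD f xs dd)/2) (by linarith)
    linarith
  obtain ⟨i, -, hi⟩ := Finset.exists_mem_eq_sup' (Finset.univ_nonempty)
    (fun i : Fin m => ⟪gradient (f i) xs, dd⟫)
  refine ⟨i, ?_⟩
  rw [maxD_def, hi] at h0le
  exact h0le
end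
end

section
/- Let U > 0 and suppose each f_i is U-strongly convex with ∇f_i Lipschitz continuous with constant L_i and bounded below by f_i^min; fix x₀ ∈ ℝⁿ. Let x, x' ∈ ℝⁿ with s := x' − x ≠ 0 and f_i(x') ≤ f_i(x) ≤ f_i(x₀) for all i, let λ ∈ Δ_m, y := Σ_{i=1}^m λ_i (∇f_i(x') − ∇f_i(x)), m̂ := max(−yᵀs/‖s‖², 0) + Σ_{i=1}^m λ_i (f_i(x) − f_i(x')), and γ := y + m̂ s. Then γᵀs/‖s‖² ≥ U, and ‖γ‖ ≤ r ‖s‖ with r := 2 max_{1≤i≤m} L_i + max_{1≤i≤m}(f_i(x₀) − f_i^min); in particular ‖γ‖²/(γᵀs) ≤ r²/U. -/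
open RealInnerProductSpace

noncomputable section

lemma strong_grad_mono {n : ℕ} (g : E n → ℝ) (hg : ContDiff ℝ 1 g) (U : ℝ)
    (hsc : ConvexOn ℝ Set.univ (fun z : E n => g z - U / 2 * ‖z‖ ^ 2)) (x x' : E n) :
    U * ‖x' - x‖ ^ 2 ≤ ⟪gradient g x' - gradient g x, x' - x⟫ := by
  set s : E n := x' - x with hs
  have hx' : x + s = x' := by simp [hs]
  have key : ∀ t : ℝ, ‖x + t • s‖ ^ 2 = ‖x‖ ^ 2 + 2 * t * ⟪x, s⟫ + t ^ 2 * ‖s‖ ^ 2 := by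
    intro t
    rw [norm_add_sq_real, norm_smul, real_inner_smul_right, mul_pow]
    simp [sq_abs]
    ring
  set φ : ℝ → ℝ := fun t => g (x + t • s) - U / 2 * ‖x + t • s‖ ^ 2 with hφ
  have hconv : ConvexOn ℝ Set.univ φ := by
    have h := hsc.comp_affineMap (AffineMap.lineMap x x' : ℝ →ᵃ[ℝ] E n)
    have hpre : ((AffineMap.lineMap x x' : ℝ →ᵃ[ℝ] E n)) ⁻¹' Set.univ = Set.univ :=
      Set.preimage_univ
    rw [hpre] at h
    suffices hφeq : φ = (fun z => g z - U / 2 * ‖z‖ ^ 2) ∘ ⇑(AffineMap.lineMap x x' : ℝ →ᵃ[ℝ] E n) by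
      rw [hφeq]; exact h
    funext t
    have hlm : (AffineMap.lineMap x x' : ℝ →ᵃ[ℝ] E n) t = x + t • s := by
      rw [AffineMap.lineMap_apply_module, hs]; module
    simp only [Function.comp_apply, hlm, hφ]
  have hderiv : ∀ t : ℝ, HasDerivAt φ
      (⟪gradient g (x + t • s), s⟫ - U * (⟪x, s⟫ + t * ‖s‖ ^ 2)) t := by
    intro t
    have hc : HasDerivAt (fun t : ℝ => x + t • s) s t := by
      simpa using ((hasDerivAt_id t).smul_const s).const_add x
    have hgd := ((hg.differentiable one_ne_zero) (x + t • s)).hasGradientAt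
    have h1 : HasDerivAt (fun t : ℝ => g (x + t • s)) ⟪gradient g (x + t • s), s⟫ t := by
      have := (hasGradientAt_iff_hasFDerivAt.mp hgd).comp_hasDerivAt t hc
      exact this.congr_deriv (by simp)
    have h2 : HasDerivAt (fun t : ℝ => U / 2 * ‖x + t • s‖ ^ 2)
        (U * (⟪x, s⟫ + t * ‖s‖ ^ 2)) t := by
      have ha : HasDerivAt (fun t : ℝ => ‖x‖ ^ 2 + 2 * t * ⟪x, s⟫ + t ^ 2 * ‖s‖ ^ 2)
          (2 * ⟪x, s⟫ + 2 * t * ‖s‖ ^ 2) t := by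
        have hb : HasDerivAt (fun t : ℝ => 2 * t * ⟪x, s⟫) (2 * ⟪x, s⟫) t := by
          simpa using ((hasDerivAt_id t).const_mul 2).mul_const ⟪x, s⟫
        have hc2 : HasDerivAt (fun t : ℝ => t ^ 2 * ‖s‖ ^ 2) (2 * t * ‖s‖ ^ 2) t := by
          simpa [mul_comm] using (hasDerivAt_pow 2 t).mul_const (‖s‖ ^ 2)
        exact (((hasDerivAt_const t (‖x‖ ^ 2)).add hb).add hc2).congr_deriv (by ring)
      have := ha.const_mul (U / 2)
      have heq : (fun t : ℝ => U / 2 * (‖x‖ ^ 2 + 2 * t * ⟪x, s⟫ + t ^ 2 * ‖s‖ ^ 2))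
          = fun t : ℝ => U / 2 * ‖x + t • s‖ ^ 2 := by
        funext u; rw [key u]
      rw [heq] at this
      exact this.congr_deriv (by ring)
    exact h1.sub h2
  have hD0 := hconv.le_slope_of_hasDerivAt (Set.mem_univ (0 : ℝ)) (Set.mem_univ (1 : ℝ))
    one_pos (hderiv 0)
  have hD1 := hconv.slope_le_of_hasDerivAt (Set.mem_univ (0 : ℝ)) (Set.mem_univ (1 : ℝ))
    one_pos (hderiv 1)
  have hmono := hD0.trans hD1
  simp only [zero_smul, add_zero, one_smul, hx', zero_mul, one_mul] at hmono
  rw [inner_sub_left]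
  linarith

/-- curvature bounds for γ under strong convexity. -/
theorem stmt17 {n m : ℕ} [NeZero m] (f : Fin m → E n → ℝ)
    (hf : ∀ i, ContDiff ℝ 1 (f i))
    (U : ℝ) (hU : 0 < U)
    (hsc : ∀ i, ConvexOn ℝ Set.univ (fun z : E n => f i z - U / 2 * ‖z‖ ^ 2))
    (L : Fin m → NNReal) (hL : ∀ i, LipschitzWith (L i) (fun z => gradient (f i) z))
    (fmin : Fin m → ℝ) (hfmin : ∀ i, ∀ z : E n, fmin i ≤ f i z)
    (x₀ x x' s : E n) (hs : s = x' - x) (hs0 : s ≠ 0)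
    (hmono : ∀ i, f i x' ≤ f i x) (hmono0 : ∀ i, f i x ≤ f i x₀)
    (lam : Fin m → ℝ) (hlam : lam ∈ stdSimplex ℝ (Fin m))
    (y : E n) (hy : y = ∑ i, lam i • (gradient (f i) x' - gradient (f i) x))
    (mh : ℝ) (hmh : mh = max (-(⟪y, s⟫ / ‖s‖ ^ 2)) 0 + ∑ i, lam i * (f i x - f i x'))
    (γ : E n) (hγ : γ = y + mh • s)
    (r : ℝ)
    (hr : r = 2 * (Finset.univ.sup' Finset.univ_nonempty fun i => (L i : ℝ)) +
      Finset.univ.sup' Finset.univ_nonempty fun i => f i x₀ - fmin i) :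
    U ≤ ⟪γ, s⟫ / ‖s‖ ^ 2 ∧ ‖γ‖ ≤ r * ‖s‖ ∧ ‖γ‖ ^ 2 / ⟪γ, s⟫ ≤ r ^ 2 / U := by
  obtain ⟨hlam0, hlam1⟩ := hlam
  have hs2 : (0 : ℝ) < ‖s‖ ^ 2 := pow_pos (norm_pos_iff.mpr hs0) 2
  set Lmax : ℝ := Finset.univ.sup' Finset.univ_nonempty fun i => (L i : ℝ) with hLmax
  set Fmax : ℝ := Finset.univ.sup' Finset.univ_nonempty fun i => f i x₀ - fmin i with hFmax
  have i0 : Fin m := ⟨0, Nat.pos_of_ne_zero (NeZero.ne m)⟩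
  have hLmax0 : 0 ≤ Lmax :=
    le_trans (L i0).coe_nonneg (Finset.le_sup' (fun i => (L i : ℝ)) (Finset.mem_univ i0))
  have hFmax0 : 0 ≤ Fmax :=
    le_trans (sub_nonneg.mpr ((hfmin i0 x₀))) (Finset.le_sup' (fun i => f i x₀ - fmin i) (Finset.mem_univ i0))
  have hr0 : 0 ≤ r := by rw [hr]; linarith
  -- strong monotonicity of each gradient
  have hkey : ∀ i, U * ‖s‖ ^ 2 ≤ ⟪gradient (f i) x' - gradient (f i) x, s⟫ := by
    intro i
    have := strong_grad_mono (f i) (hf i) U (hsc i) x x'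
    rwa [← hs] at this
  -- lower bound on ⟪y, s⟫
  have hys : U * ‖s‖ ^ 2 ≤ ⟪y, s⟫ := by
    rw [hy, sum_inner]
    calc U * ‖s‖ ^ 2 = ∑ i, lam i * (U * ‖s‖ ^ 2) := by
          rw [← Finset.sum_mul, hlam1, one_mul]
      _ ≤ ∑ i, ⟪lam i • (gradient (f i) x' - gradient (f i) x), s⟫ := by
          apply Finset.sum_le_sum
          intro i _
          rw [real_inner_smul_left]
          exact mul_le_mul_of_nonneg_left (hkey i) (hlam0 i)
  have hys0 : 0 < ⟪y, s⟫ := lt_of_lt_of_le (mul_pos hU hs2) hys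
  -- the max term vanishes
  have hmax : max (-(⟪y, s⟫ / ‖s‖ ^ 2)) 0 = 0 := by
    apply max_eq_right
    rw [neg_nonpos]
    exact div_nonneg hys0.le hs2.le
  have hmh' : mh = ∑ i, lam i * (f i x - f i x') := by rw [hmh, hmax, zero_add]
  have hmh0 : 0 ≤ mh := by
    rw [hmh']
    apply Finset.sum_nonneg
    intro i _
    exact mul_nonneg (hlam0 i) (sub_nonneg.mpr (hmono i))
  have hmhF : mh ≤ Fmax := by
    rw [hmh']
    calc ∑ i, lam i * (f i x - f i x') ≤ ∑ i, lam i * Fmax := by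
          apply Finset.sum_le_sum
          intro i _
          apply mul_le_mul_of_nonneg_left _ (hlam0 i)
          calc f i x - f i x' ≤ f i x₀ - fmin i :=
                sub_le_sub (hmono0 i) (hfmin i x')
            _ ≤ Fmax := Finset.le_sup' (fun i => f i x₀ - fmin i) (Finset.mem_univ i)
      _ = Fmax := by rw [← Finset.sum_mul, hlam1, one_mul]
  -- inner product of γ with s
  have hγs : ⟪γ, s⟫ = ⟪y, s⟫ + mh * ‖s‖ ^ 2 := by
    rw [hγ, inner_add_left, real_inner_smul_left, real_inner_self_eq_norm_sq]
  have hγs_lb : U * ‖s‖ ^ 2 ≤ ⟪γ, s⟫ := by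
    rw [hγs]
    nlinarith
  have hγs0 : 0 < ⟪γ, s⟫ := lt_of_lt_of_le (mul_pos hU hs2) hγs_lb
  -- norm bound on y
  have hyn : ‖y‖ ≤ Lmax * ‖s‖ := by
    rw [hy]
    calc ‖∑ i, lam i • (gradient (f i) x' - gradient (f i) x)‖
        ≤ ∑ i, ‖lam i • (gradient (f i) x' - gradient (f i) x)‖ :=
          norm_sum_le _ _
      _ ≤ ∑ i, lam i * (Lmax * ‖s‖) := by
          apply Finset.sum_le_sum
          intro i _
          rw [norm_smul, Real.norm_eq_abs, abs_of_nonneg (hlam0 i)]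
          apply mul_le_mul_of_nonneg_left _ (hlam0 i)
          have hlip := (hL i).dist_le_mul x' x
          rw [dist_eq_norm, dist_eq_norm] at hlip
          calc ‖gradient (f i) x' - gradient (f i) x‖ ≤ (L i : ℝ) * ‖x' - x‖ := hlip
            _ ≤ Lmax * ‖s‖ := by
                rw [← hs]
                exact mul_le_mul_of_nonneg_right
                  (Finset.le_sup' (fun i => (L i : ℝ)) (Finset.mem_univ i))
                  (norm_nonneg s)
      _ = Lmax * ‖s‖ := by rw [← Finset.sum_mul, hlam1, one_mul]
  -- norm bound on γ
  have hγn : ‖γ‖ ≤ r * ‖s‖ := by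
    rw [hγ]
    calc ‖y + mh • s‖ ≤ ‖y‖ + ‖mh • s‖ := norm_add_le _ _
      _ = ‖y‖ + mh * ‖s‖ := by
          rw [norm_smul, Real.norm_eq_abs, abs_of_nonneg hmh0]
      _ ≤ Lmax * ‖s‖ + Fmax * ‖s‖ := by gcongr
      _ ≤ r * ‖s‖ := by rw [hr]; nlinarith [norm_nonneg s]
  refine ⟨?_, hγn, ?_⟩
  · rw [le_div_iff₀ hs2]
    exact hγs_lb
  · have h1 : ‖γ‖ ^ 2 ≤ r ^ 2 * ‖s‖ ^ 2 := by
      have := pow_le_pow_left₀ (norm_nonneg γ) hγn 2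
      calc ‖γ‖ ^ 2 ≤ (r * ‖s‖) ^ 2 := this
        _ = r ^ 2 * ‖s‖ ^ 2 := by ring
    have h2 : ‖γ‖ ^ 2 / ⟪γ, s⟫ ≤ r ^ 2 * ‖s‖ ^ 2 / (U * ‖s‖ ^ 2) :=
      div_le_div₀ (by positivity) h1 (mul_pos hU hs2) hγs_lb
    rwa [mul_div_mul_right _ _ (ne_of_gt hs2)] at h2
end
end
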